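/- arXiv:1112.6122 — 6 statements merged into one kernel-verified Lean document; each statement's English description precedes it below -/
import Mathlib

section
/- For 1 ≤ p < ∞, the operator T defined on measurable functions f : (0,∞) → ℝ by (Tf)(r) = -∫_r^∞ f(s)/s ds is bounded on L^p((0,∞), r dr), i.e. ‖Tf‖_{L^p(r dr)} ≲_p ‖f‖_{L^p(r dr)}. -/
open MeasureTheory Set
open scoped ENNReal NNReal

/-- The measure `r dr` on `(0,∞)`. -/
noncomputable def muRad : Measure ℝ :=
  (volume.restrict (Set.Ioi (0:ℝ))).withDensity (fun r => ENNReal.ofReal r)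

private lemma tonelli0 (G : ℝ → ℝ≥0∞) (hG : Measurable G) :
    ∫⁻ r in Set.Ioi (0:ℝ), ∫⁻ s in Set.Ioi r, G s
      = ∫⁻ s in Set.Ioi (0:ℝ), ENNReal.ofReal s * G s := by
  have hmeas : Measurable (Function.uncurry fun r s : ℝ => if r < s then G s else 0) := by
    apply Measurable.ite
    · exact measurableSet_lt measurable_fst measurable_snd
    · exact hG.comp measurable_snd
    · exact measurable_const
  calc ∫⁻ r in Set.Ioi (0:ℝ), ∫⁻ s in Set.Ioi r, G s
      = ∫⁻ r in Set.Ioi (0:ℝ), ∫⁻ s in Set.Ioi (0:ℝ), (if r < s then G s else 0) := by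
        refine setLIntegral_congr_fun measurableSet_Ioi (fun r hr => ?_)
        have hsub : Set.Ioi r ⊆ Set.Ioi (0:ℝ) := fun x hx => show 0 < x from lt_trans hr hx
        have hind : (fun s => if r < s then G s else 0) = (Set.Ioi r).indicator G := by
          ext s; simp [Set.indicator, Set.mem_Ioi]
        rw [hind, lintegral_indicator measurableSet_Ioi,
          Measure.restrict_restrict measurableSet_Ioi,
          Set.inter_eq_self_of_subset_left hsub]
    _ = ∫⁻ s in Set.Ioi (0:ℝ), ∫⁻ r in Set.Ioi (0:ℝ), (if r < s then G s else 0) :=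
        lintegral_lintegral_swap hmeas.aemeasurable
    _ = ∫⁻ s in Set.Ioi (0:ℝ), ENNReal.ofReal s * G s := by
        refine setLIntegral_congr_fun measurableSet_Ioi (fun s hs => ?_)
        have hind : (fun r => if r < s then G s else 0)
            = (Set.Iio s).indicator (fun _ => G s) := by
          ext r; simp [Set.indicator, Set.mem_Iio]
        rw [hind, lintegral_indicator measurableSet_Iio,
          setLIntegral_const, Measure.restrict_apply measurableSet_Iio]
        have : Set.Iio s ∩ Set.Ioi (0:ℝ) = Set.Ioo 0 s := by
          ext x; simp [Set.mem_Ioo, and_comm]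
        rw [this, Real.volume_Ioo, sub_zero, mul_comm]

private lemma scaffold (pr : ℝ) (f g : ℝ → ℝ) (hf : Measurable f) (K : ℝ≥0∞) (hK : K ≠ ⊤)
    (hpt : ∀ r : ℝ, 0 < r → ENNReal.ofReal r * (‖g r‖₊ : ℝ≥0∞) ^ pr
      ≤ K * ∫⁻ s in Set.Ioi r, (‖f s‖₊ : ℝ≥0∞) ^ pr) :
    ∫⁻ r, (‖g r‖₊ : ℝ≥0∞) ^ pr ∂muRad ≤ K * ∫⁻ s, (‖f s‖₊ : ℝ≥0∞) ^ pr ∂muRad := by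
  have hGm : Measurable fun s => (‖f s‖₊ : ℝ≥0∞) ^ pr :=
    ENNReal.continuous_rpow_const.measurable.comp hf.enorm
  have hd : Measurable fun r : ℝ => ENNReal.ofReal r := ENNReal.measurable_ofReal
  have hfin : ∀ᵐ r ∂(volume.restrict (Set.Ioi (0:ℝ))), ENNReal.ofReal r < ⊤ :=
    ae_of_all _ fun r => ENNReal.ofReal_lt_top
  rw [muRad, lintegral_withDensity_eq_lintegral_mul_non_measurable _ hd hfin,
    lintegral_withDensity_eq_lintegral_mul_non_measurable _ hd hfin]
  calc ∫⁻ r in Set.Ioi (0:ℝ),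
        ((fun r => ENNReal.ofReal r) * fun r => (‖g r‖₊ : ℝ≥0∞) ^ pr) r
      ≤ ∫⁻ r in Set.Ioi (0:ℝ), K * ∫⁻ s in Set.Ioi r, (‖f s‖₊ : ℝ≥0∞) ^ pr := by
        refine lintegral_mono_ae ((ae_restrict_iff' measurableSet_Ioi).2
          (ae_of_all _ fun r hr => ?_))
        exact hpt r hr
    _ = K * ∫⁻ r in Set.Ioi (0:ℝ), ∫⁻ s in Set.Ioi r, (‖f s‖₊ : ℝ≥0∞) ^ pr :=
        lintegral_const_mul' _ _ hK
    _ = K * ∫⁻ s in Set.Ioi (0:ℝ), ENNReal.ofReal s * (‖f s‖₊ : ℝ≥0∞) ^ pr := by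
        rw [tonelli0 _ hGm]
    _ = K * ∫⁻ s in Set.Ioi (0:ℝ),
        ((fun r => ENNReal.ofReal r) * fun s => (‖f s‖₊ : ℝ≥0∞) ^ pr) s := rfl

private lemma nnnorm_div_eq (f : ℝ → ℝ) (s : ℝ) (hs : 0 < s) :
    (‖f s / s‖₊ : ℝ≥0∞) = (‖f s‖₊ : ℝ≥0∞) * (ENNReal.ofReal s)⁻¹ := by
  rw [← enorm_eq_nnnorm, ← enorm_eq_nnnorm, ← ofReal_norm, ← ofReal_norm]
  rw [Real.norm_eq_abs, Real.norm_eq_abs, abs_div, abs_of_pos hs, div_eq_mul_inv,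
    ENNReal.ofReal_mul (abs_nonneg _), ENNReal.ofReal_inv_of_pos hs]

private lemma norm_T_le (f : ℝ → ℝ) (r : ℝ) (hr : 0 < r) :
    (‖-∫ s in Set.Ioi r, f s / s‖₊ : ℝ≥0∞)
      ≤ ∫⁻ s in Set.Ioi r, (‖f s‖₊ : ℝ≥0∞) * (ENNReal.ofReal s)⁻¹ := by
  rw [nnnorm_neg]
  refine le_trans (enorm_integral_le_lintegral_enorm _) (le_of_eq ?_)
  refine setLIntegral_congr_fun measurableSet_Ioi (fun s hs => ?_)
  exact nnnorm_div_eq f s (lt_trans hr hs)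

/-- For `1 ≤ p < ∞`, the operator `Tf(r) = -∫_r^∞ f(s)/s ds` is bounded on `L^p(r dr)`. -/
theorem stmt0 (p : ℝ≥0∞) (hp1 : 1 ≤ p) (hp2 : p ≠ ⊤) :
    ∃ C : ℝ≥0, 0 < C ∧ ∀ f : ℝ → ℝ, Measurable f →
      eLpNorm (fun r => -∫ s in Set.Ioi r, f s / s) p muRad ≤ C * eLpNorm f p muRad := by
  have hp0 : p ≠ 0 := by intro h; rw [h] at hp1; exact absurd hp1 (by simp)
  set pr := p.toReal with hprdef
  have hpr1 : 1 ≤ pr := by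
    have := ENNReal.toReal_mono hp2 hp1
    simpa using this
  have hpr0 : 0 < pr := lt_of_lt_of_le one_pos hpr1
  have help : ∀ g : ℝ → ℝ, eLpNorm g p muRad
      = (∫⁻ x, (‖g x‖₊ : ℝ≥0∞) ^ pr ∂muRad) ^ (1 / pr) := fun g =>
    eLpNorm_eq_lintegral_rpow_enorm_toReal hp0 hp2
  rcases eq_or_lt_of_le hpr1 with hpr | hpr
  · -- pr = 1
    refine ⟨1, one_pos, fun f hf => ?_⟩
    have key : ∫⁻ r, (‖-∫ s in Set.Ioi r, f s / s‖₊ : ℝ≥0∞) ^ pr ∂muRad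
        ≤ 1 * ∫⁻ s, (‖f s‖₊ : ℝ≥0∞) ^ pr ∂muRad := by
      refine scaffold pr f _ hf 1 (by simp) fun r hr => ?_
      rw [one_mul, ← hpr]
      simp only [ENNReal.rpow_one]
      calc ENNReal.ofReal r * (‖-∫ s in Set.Ioi r, f s / s‖₊ : ℝ≥0∞)
          ≤ ENNReal.ofReal r *
            ∫⁻ s in Set.Ioi r, (‖f s‖₊ : ℝ≥0∞) * (ENNReal.ofReal s)⁻¹ :=
            mul_le_mul_right (norm_T_le f r hr) _
        _ = ∫⁻ s in Set.Ioi r,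
            ENNReal.ofReal r * ((‖f s‖₊ : ℝ≥0∞) * (ENNReal.ofReal s)⁻¹) :=
            (lintegral_const_mul' _ _ ENNReal.ofReal_ne_top).symm
        _ ≤ ∫⁻ s in Set.Ioi r, (‖f s‖₊ : ℝ≥0∞) := by
            refine lintegral_mono_ae ((ae_restrict_iff' measurableSet_Ioi).2
              (ae_of_all _ fun s hs => ?_))
            have hs0 : 0 < s := lt_trans hr hs
            calc ENNReal.ofReal r * ((‖f s‖₊ : ℝ≥0∞) * (ENNReal.ofReal s)⁻¹)
                ≤ ENNReal.ofReal s * ((‖f s‖₊ : ℝ≥0∞) * (ENNReal.ofReal s)⁻¹) :=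
                  mul_le_mul_left (ENNReal.ofReal_le_ofReal (le_of_lt hs)) _
              _ = (‖f s‖₊ : ℝ≥0∞) * (ENNReal.ofReal s * (ENNReal.ofReal s)⁻¹) := by ring
              _ ≤ (‖f s‖₊ : ℝ≥0∞) * 1 := mul_le_mul_right (ENNReal.mul_inv_le_one _) _
              _ = (‖f s‖₊ : ℝ≥0∞) := mul_one _
    rw [help, help]
    rw [one_mul] at key
    calc (∫⁻ x, (‖-∫ s in Set.Ioi x, f s / s‖₊ : ℝ≥0∞) ^ pr ∂muRad) ^ (1 / pr)
        ≤ (∫⁻ s, (‖f s‖₊ : ℝ≥0∞) ^ pr ∂muRad) ^ (1 / pr) :=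
          ENNReal.rpow_le_rpow key (by positivity)
      _ = ((1:ℝ≥0) : ℝ≥0∞) * (∫⁻ s, (‖f s‖₊ : ℝ≥0∞) ^ pr ∂muRad) ^ (1 / pr) := by
          simp
  · -- 1 < pr
    set q : ℝ := pr / (pr - 1) with hqdef
    have hc : pr.HolderConjugate q := Real.HolderConjugate.conjExponent hpr
    have hq1 : 1 < q := hc.symm.lt
    have hKpos : (0:ℝ) < (pr - 1) ^ (pr - 1) := Real.rpow_pos_of_pos (by linarith) _
    set K : ℝ≥0∞ := ENNReal.ofReal ((pr - 1) ^ (pr - 1)) with hKdef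
    have hKne0 : K ≠ 0 := by
      simp [hKdef, ENNReal.ofReal_eq_zero, not_le, hKpos]
    have hKnetop : K ≠ ⊤ := ENNReal.ofReal_ne_top
    have hCne0 : K ^ (1 / pr) ≠ 0 := by
      intro h
      rw [ENNReal.rpow_eq_zero_iff] at h
      rcases h with ⟨h0, _⟩ | ⟨htop, _⟩
      · exact hKne0 h0
      · exact hKnetop htop
    have hCnetop : K ^ (1 / pr) ≠ ⊤ := ENNReal.rpow_ne_top_of_nonneg (by positivity) hKnetop
    refine ⟨(K ^ (1 / pr)).toNNReal, ENNReal.toNNReal_pos hCne0 hCnetop, fun f hf => ?_⟩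
    have hcoe : ((K ^ (1 / pr)).toNNReal : ℝ≥0∞) = K ^ (1 / pr) :=
      ENNReal.coe_toNNReal hCnetop
    -- pointwise bound
    have hpt : ∀ r : ℝ, 0 < r → ENNReal.ofReal r
        * (‖-∫ s in Set.Ioi r, f s / s‖₊ : ℝ≥0∞) ^ pr
        ≤ K * ∫⁻ s in Set.Ioi r, (‖f s‖₊ : ℝ≥0∞) ^ pr := by
      intro r hr
      set A : ℝ≥0∞ := ∫⁻ s in Set.Ioi r, (‖f s‖₊ : ℝ≥0∞) ^ pr with hAdef
      -- Hölder
      have holder : (∫⁻ s in Set.Ioi r, (‖f s‖₊ : ℝ≥0∞) * (ENNReal.ofReal s)⁻¹)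
          ≤ A ^ (1 / pr) *
            (∫⁻ s in Set.Ioi r, ((ENNReal.ofReal s)⁻¹) ^ q) ^ (1 / q) :=
        ENNReal.lintegral_mul_le_Lp_mul_Lq _ hc
          hf.enorm.aemeasurable
          (ENNReal.measurable_ofReal.inv.aemeasurable)
      -- compute B
      have hBval : (∫⁻ s in Set.Ioi r, ((ENNReal.ofReal s)⁻¹) ^ q)
          = ENNReal.ofReal (r ^ (1 - q) / (q - 1)) := by
        have h1 : (∫⁻ s in Set.Ioi r, ((ENNReal.ofReal s)⁻¹) ^ q)
            = ∫⁻ s in Set.Ioi r, ENNReal.ofReal (s ^ (-q)) := by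
          refine setLIntegral_congr_fun measurableSet_Ioi (fun s hs => ?_)
          have hs0 : 0 < s := lt_trans hr hs
          rw [ENNReal.inv_rpow, ENNReal.ofReal_rpow_of_pos hs0,
            ← ENNReal.ofReal_inv_of_pos (Real.rpow_pos_of_pos hs0 _),
            ← Real.rpow_neg (le_of_lt hs0)]
        have hint : IntegrableOn (fun s : ℝ => s ^ (-q)) (Set.Ioi r) :=
          integrableOn_Ioi_rpow_of_lt (by linarith) hr
        have hnn : 0 ≤ᵐ[volume.restrict (Set.Ioi r)] fun s : ℝ => s ^ (-q) :=
          (ae_restrict_iff' measurableSet_Ioi).2 (ae_of_all _ fun s hs =>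
            le_of_lt (Real.rpow_pos_of_pos (lt_trans hr hs) _))
        rw [h1, ← ofReal_integral_eq_lintegral_ofReal hint hnn,
          integral_Ioi_rpow_of_lt (by linarith) hr]
        congr 1
        rw [div_eq_div_iff (by linarith : (-q:ℝ) + 1 ≠ 0) (by linarith : (q:ℝ) - 1 ≠ 0)]
        ring_nf
      -- the key real computation
      have hqpr : (q - 1) * (pr - 1) = 1 := by
        have hm := hc.mul_eq_add
        nlinarith [hm]
      have hBpow : (ENNReal.ofReal (r ^ (1 - q) / (q - 1))) ^ (pr - 1)
          = K * (ENNReal.ofReal r)⁻¹ := by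
        have hpos : (0:ℝ) < r ^ (1 - q) / (q - 1) :=
          div_pos (Real.rpow_pos_of_pos hr _) (by linarith)
        rw [ENNReal.ofReal_rpow_of_pos hpos]
        have hq1e : q - 1 = (pr - 1)⁻¹ := by
          rw [inv_eq_one_div, eq_div_iff (by linarith : pr - 1 ≠ 0)]
          exact hqpr
        have hreal : (r ^ (1 - q) / (q - 1)) ^ (pr - 1)
            = (pr - 1) ^ (pr - 1) * r⁻¹ := by
          rw [Real.div_rpow (le_of_lt (Real.rpow_pos_of_pos hr _))
              (by linarith : (0:ℝ) ≤ q - 1),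
            ← Real.rpow_mul hr.le,
            show (1 - q) * (pr - 1) = -1 by nlinarith [hqpr],
            Real.rpow_neg_one, hq1e,
            Real.inv_rpow (by linarith : (0:ℝ) ≤ pr - 1), div_eq_mul_inv, inv_inv, mul_comm]
        rw [hreal, ENNReal.ofReal_mul (le_of_lt hKpos),
          ENNReal.ofReal_inv_of_pos hr]
      -- combine
      calc ENNReal.ofReal r * (‖-∫ s in Set.Ioi r, f s / s‖₊ : ℝ≥0∞) ^ pr
          ≤ ENNReal.ofReal r *
            (A ^ (1 / pr) * (ENNReal.ofReal (r ^ (1 - q) / (q - 1))) ^ (1 / q)) ^ pr := by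
            refine mul_le_mul_right ?_ _
            refine ENNReal.rpow_le_rpow ?_ (le_of_lt hpr0)
            refine le_trans (norm_T_le f r hr) ?_
            rw [← hBval]
            exact holder
        _ = ENNReal.ofReal r * (A * K * (ENNReal.ofReal r)⁻¹) := by
            rw [ENNReal.mul_rpow_of_nonneg _ _ (le_of_lt hpr0),
              ← ENNReal.rpow_mul, ← ENNReal.rpow_mul,
              one_div_mul_cancel (ne_of_gt hpr0), ENNReal.rpow_one,
              show 1 / q * pr = pr - 1 by
                rw [div_mul_eq_mul_div, one_mul, hc.div_conj_eq_sub_one],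
              hBpow, mul_assoc]
        _ ≤ K * A := by
            rw [show ENNReal.ofReal r * (A * K * (ENNReal.ofReal r)⁻¹)
                = K * A * (ENNReal.ofReal r * (ENNReal.ofReal r)⁻¹) by ring]
            calc K * A * (ENNReal.ofReal r * (ENNReal.ofReal r)⁻¹)
                ≤ K * A * 1 := mul_le_mul_right (ENNReal.mul_inv_le_one _) _
              _ = K * A := mul_one _
    have key := scaffold pr f _ hf K hKnetop hpt
    rw [help, help, hcoe]
    calc (∫⁻ x, (‖-∫ s in Set.Ioi x, f s / s‖₊ : ℝ≥0∞) ^ pr ∂muRad) ^ (1 / pr)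
        ≤ (K * ∫⁻ s, (‖f s‖₊ : ℝ≥0∞) ^ pr ∂muRad) ^ (1 / pr) :=
          ENNReal.rpow_le_rpow key (by positivity)
      _ = K ^ (1 / pr) * (∫⁻ s, (‖f s‖₊ : ℝ≥0∞) ^ pr ∂muRad) ^ (1 / pr) :=
          ENNReal.mul_rpow_of_nonneg _ _ (by positivity)
end

section
/- For f : (0,∞) → ℝ with f ∈ L^1((0,∞), r dr), the function g(r) = -∫_r^∞ f(s) ds satisfies ‖g‖_{L^2(r dr)} ≲ ‖f‖_{L^1(r dr)}. -/
open MeasureTheory Set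
open scoped ENNReal NNReal

set_option maxHeartbeats 1000000 in
/-- For `f ∈ L¹(r dr)`, the function `g(r) = -∫_r^∞ f(s) ds` satisfies
`‖g‖_{L²(r dr)} ≲ ‖f‖_{L¹(r dr)}`. -/
theorem stmt2 :
    ∃ C : ℝ≥0, 0 < C ∧ ∀ f : ℝ → ℝ, Measurable f → MemLp f 1 muRad →
      eLpNorm (fun r => -∫ s in Set.Ioi r, f s) 2 muRad ≤ C * eLpNorm f 1 muRad := by
  refine ⟨1, one_pos, fun f hf _ => ?_⟩
  set F : ℝ → ℝ≥0∞ := fun s => (‖f s‖₊ : ℝ≥0∞) with hF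
  have hFm : Measurable F := hf.nnnorm.coe_nnreal_ennreal
  set w : ℝ → ℝ≥0∞ := fun r => ENNReal.ofReal r with hw
  have hwm : Measurable w := ENNReal.measurable_ofReal
  -- the kernel k r s = 1_{s > r} F s
  set k : ℝ → ℝ → ℝ≥0∞ := fun r s => (Ioi r).indicator F s with hk
  have hkm : Measurable (fun p : ℝ × ℝ => k p.1 p.2) := by
    have : (fun p : ℝ × ℝ => k p.1 p.2)
        = {p : ℝ × ℝ | p.1 < p.2}.indicator (fun p => F p.2) := by
      ext p
      by_cases h : p.1 < p.2 <;>
        simp [hk, Set.indicator, h, Set.mem_Ioi]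
    rw [this]
    exact (hFm.comp measurable_snd).indicator (measurableSet_lt measurable_fst measurable_snd)
  have hkm1 : ∀ r, Measurable (k r) := fun r => hFm.indicator measurableSet_Ioi
  set T : ℝ → ℝ≥0∞ := fun r => ∫⁻ t, k r t with hT
  have hTm : Measurable T := hkm.lintegral_prod_right'
  have hT_eq : ∀ r, T r = ∫⁻ s in Ioi r, F s := fun r =>
    lintegral_indicator measurableSet_Ioi F
  -- weighted indicator c
  set c : ℝ → ℝ → ℝ≥0∞ := fun r s => (Ioi (0:ℝ)).indicator w r * k r s with hc
  have hcm : Measurable (fun p : ℝ × ℝ => c p.1 p.2) :=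
    ((hwm.indicator measurableSet_Ioi).comp measurable_fst).mul hkm
  have hcm1 : ∀ r, Measurable (c r) := fun r => (hkm1 r).const_mul _
  -- M = eLpNorm f 1
  set M : ℝ≥0∞ := ∫⁻ s, w s * F s with hM
  have hM_eq : eLpNorm f 1 muRad = M := by
    rw [eLpNorm_one_eq_lintegral_enorm, muRad]
    change (∫⁻ x, F x ∂_) = M
    rw [lintegral_withDensity_eq_lintegral_mul _ hwm hFm,
      ← lintegral_indicator measurableSet_Ioi]
    congr 1
    ext s
    by_cases h : s ∈ Ioi (0:ℝ)
    · simp [h]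
    · have hs : s ≤ 0 := not_lt.1 h
      simp [h, hw, ENNReal.ofReal_eq_zero.2 hs]
  -- Step 1: L² norm of g bounded via the weighted square integral
  set A : ℝ≥0∞ := ∫⁻ r, (Ioi (0:ℝ)).indicator w r * T r * T r with hA
  have step1 : eLpNorm (fun r => -∫ s in Set.Ioi r, f s) 2 muRad ≤ A ^ (1/2 : ℝ) := by
    rw [eLpNorm_eq_lintegral_rpow_enorm_toReal (by norm_num) (by norm_num)]
    simp only [ENNReal.toReal_ofNat]
    gcongr
    calc ∫⁻ r, (‖-∫ s in Set.Ioi r, f s‖₊ : ℝ≥0∞) ^ (2:ℝ) ∂muRad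
        ≤ ∫⁻ r, T r ^ (2:ℝ) ∂muRad := by
          refine lintegral_mono fun r => ?_
          gcongr
          rw [nnnorm_neg, hT_eq]
          exact enorm_integral_le_lintegral_enorm _
      _ = ∫⁻ r in Ioi (0:ℝ), w r * T r ^ (2:ℝ) := by
          rw [muRad, lintegral_withDensity_eq_lintegral_mul _ hwm
            (hTm.pow_const (2:ℝ))]
          rfl
      _ = A := by
          rw [hA, ← lintegral_indicator measurableSet_Ioi]
          congr 1
          ext r
          by_cases h : r ∈ Ioi (0:ℝ) <;>
            simp [h, ENNReal.rpow_two, sq, mul_assoc]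
  -- Step 2: expand the square and use Tonelli
  have expand : ∀ r, (Ioi (0:ℝ)).indicator w r * T r * T r = ∫⁻ s, c r s * T r := by
    intro r
    rw [lintegral_mul_const _ (hcm1 r), hc]
    simp only []
    rw [lintegral_const_mul _ (hkm1 r)]
  have swap1 : A = ∫⁻ s, ∫⁻ r, c r s * T r := by
    rw [hA]
    simp only [expand]
    exact lintegral_lintegral_swap (hcm.mul (hTm.comp measurable_fst)).aemeasurable
  -- innermost bound
  have inner_bound : ∀ s t : ℝ, (∫⁻ r, c r s * k r t) ≤ (w s * F s) * (w t * F t) := by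
    intro s t
    have hptwise : ∀ r, c r s * k r t
        = (Ioo (0:ℝ) (min s t)).indicator w r * (F s * F t) := by
      intro r
      simp only [hc, hk, Set.indicator_apply, mem_Ioi, mem_Ioo, lt_min_iff]
      split_ifs <;> simp_all <;> ring
    calc (∫⁻ r, c r s * k r t)
        = (∫⁻ r, (Ioo (0:ℝ) (min s t)).indicator w r) * (F s * F t) := by
          simp only [hptwise]
          exact lintegral_mul_const _ (hwm.indicator measurableSet_Ioo)
      _ ≤ (w s * w t) * (F s * F t) := by
          gcongr
          calc (∫⁻ r, (Ioo (0:ℝ) (min s t)).indicator w r)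
              = ∫⁻ r in Ioo (0:ℝ) (min s t), w r :=
                lintegral_indicator measurableSet_Ioo w
            _ ≤ ∫⁻ _ in Ioo (0:ℝ) (min s t), ENNReal.ofReal (min s t) :=
                setLIntegral_mono measurable_const fun r hr =>
                  ENNReal.ofReal_le_ofReal hr.2.le
            _ = ENNReal.ofReal (min s t) * volume (Ioo (0:ℝ) (min s t)) :=
                setLIntegral_const _ _
            _ ≤ w s * w t := by
                rw [Real.volume_Ioo]
                gcongr
                · exact ENNReal.ofReal_le_ofReal (min_le_left s t)
                · exact ENNReal.ofReal_le_ofReal (by simp [min_le_right s t])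
      _ = (w s * F s) * (w t * F t) := by ring
  have step2 : A ≤ M * M := by
    rw [swap1]
    have hswap2 : ∀ s : ℝ, (∫⁻ r, c r s * T r) = ∫⁻ t, ∫⁻ r, c r s * k r t := by
      intro s
      have h1 : ∀ r, c r s * T r = ∫⁻ t, c r s * k r t := fun r =>
        (lintegral_const_mul _ (hkm1 r)).symm
      simp only [h1]
      exact lintegral_lintegral_swap
        ((hcm.comp (measurable_fst.prodMk measurable_const)).mul hkm).aemeasurable
    calc (∫⁻ s, ∫⁻ r, c r s * T r)
        ≤ ∫⁻ s, ∫⁻ t, (w s * F s) * (w t * F t) := by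
          refine lintegral_mono fun s => ?_
          rw [hswap2 s]
          exact lintegral_mono fun t => inner_bound s t
      _ = M * M := by
          have h2 : ∀ s : ℝ, (∫⁻ t, (w s * F s) * (w t * F t)) = (w s * F s) * M :=
            fun s => lintegral_const_mul _ (hwm.mul hFm)
          simp only [h2]
          exact lintegral_mul_const _ (hwm.mul hFm)
  -- Conclusion
  calc eLpNorm (fun r => -∫ s in Set.Ioi r, f s) 2 muRad
      ≤ A ^ (1/2 : ℝ) := step1
    _ ≤ (M * M) ^ (1/2 : ℝ) := by gcongr
    _ = M := by
        rw [← sq, ← ENNReal.rpow_natCast M 2, ← ENNReal.rpow_mul]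
        norm_num
    _ = 1 * eLpNorm f 1 muRad := by rw [hM_eq, one_mul]
    _ ≤ _ := le_rfl
end

section
/- Every function f in the space Ḣ¹_e, defined by the norm ‖f‖²_{Ḣ¹_e} = ‖∂_r f‖²_{L²(r dr)} + ‖f/r‖²_{L²(r dr)} being finite, is continuous on (0,∞) and satisfies lim_{r→0} f(r) = 0 and lim_{r→∞} f(r) = 0. -/
open MeasureTheory Set
open scoped ENNReal NNReal

/-- Every `f ∈ Ḣ¹_e` (i.e. `∂_r f, f/r ∈ L²(r dr)`) is continuous on `(0,∞)` and has
limit `0` at `r → 0` and `r → ∞`. -/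
theorem stmt3 (f f' : ℝ → ℂ)
    (hderiv : ∀ r ∈ Set.Ioi (0:ℝ), HasDerivAt f (f' r) r)
    (h1 : MemLp f' 2 muRad)
    (h2 : MemLp (fun r => f r / (r : ℂ)) 2 muRad) :
    ContinuousOn f (Set.Ioi 0) ∧
      Filter.Tendsto f (nhdsWithin 0 (Set.Ioi 0)) (nhds 0) ∧
      Filter.Tendsto f Filter.atTop (nhds 0) := by
  have hcont : ContinuousOn f (Set.Ioi 0) := fun r hr =>
    (hderiv r hr).continuousAt.continuousWithinAt
  set F : ℝ → ℝ := fun r => ‖f r‖ ^ 2 with hFdef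
  set K : ℝ → ℝ := fun r => (‖f' r‖ ^ 2 + ‖f r / (r:ℂ)‖ ^ 2) * r with hKdef
  -- integrability of `K` on `(0,∞)` w.r.t. Lebesgue
  have hK1 : Integrable (fun r => ‖f' r‖ ^ 2) muRad :=
    (memLp_two_iff_integrable_sq_norm h1.1).1 h1
  have hK2 : Integrable (fun r => ‖f r / (r:ℂ)‖ ^ 2) muRad :=
    (memLp_two_iff_integrable_sq_norm h2.1).1 h2
  have hmeasd : Measurable (fun r : ℝ => ENNReal.ofReal r) := ENNReal.measurable_ofReal
  have hlt : ∀ᵐ r ∂(volume.restrict (Ioi (0:ℝ))), ENNReal.ofReal r < ⊤ :=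
    Filter.Eventually.of_forall fun r => ENNReal.ofReal_lt_top
  have hKint : IntegrableOn K (Ioi 0) volume := by
    have h := (integrable_withDensity_iff hmeasd hlt).1 (hK1.add hK2)
    refine h.congr ?_
    filter_upwards [ae_restrict_mem measurableSet_Ioi] with r hr
    simp [Pi.add_apply, hKdef, ENNReal.toReal_ofReal hr.le]
  -- `F r / r` is integrable on `(0,∞)`
  have hfr_int : IntegrableOn (fun r => ‖f r / (r:ℂ)‖ ^ 2 * r) (Ioi 0) volume := by
    have h := (integrable_withDensity_iff hmeasd hlt).1 hK2
    refine h.congr ?_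
    filter_upwards [ae_restrict_mem measurableSet_Ioi] with r hr
    rw [ENNReal.toReal_ofReal (le_of_lt hr)]
  have hFr : ∀ r : ℝ, 0 < r → ‖f r / (r:ℂ)‖ ^ 2 * r = F r / r := by
    intro r hr
    have : ‖f r / (r:ℂ)‖ = ‖f r‖ / r := by
      rw [norm_div, Complex.norm_real, Real.norm_of_nonneg hr.le]
    rw [this, hFdef]
    field_simp
  -- pointwise bound on the derivative of F
  have hbound : ∀ r : ℝ, 0 < r → ‖2 * (inner ℝ (f r) (f' r) : ℝ)‖ ≤ K r := by
    intro r hr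
    have hnr : ‖f r / (r:ℂ)‖ = ‖f r‖ / r := by
      rw [norm_div, Complex.norm_real, Real.norm_of_nonneg hr.le]
    have hin : |(inner ℝ (f r) (f' r) : ℝ)| ≤ ‖f r‖ * ‖f' r‖ := abs_real_inner_le_norm _ _
    have hAM : 2 * (‖f r‖ * ‖f' r‖) ≤ (‖f' r‖ ^ 2 + (‖f r‖ / r) ^ 2) * r := by
      have hkey : (‖f' r‖ ^ 2 + (‖f r‖ / r) ^ 2) * r - 2 * (‖f r‖ * ‖f' r‖)
          = (‖f' r‖ * r - ‖f r‖) ^ 2 / r := by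
        field_simp
        ring
      nlinarith [div_nonneg (sq_nonneg (‖f' r‖ * r - ‖f r‖)) hr.le]
    calc ‖2 * (inner ℝ (f r) (f' r) : ℝ)‖
        = 2 * |(inner ℝ (f r) (f' r) : ℝ)| := by
          rw [Real.norm_eq_abs, abs_mul, abs_two]
      _ ≤ 2 * (‖f r‖ * ‖f' r‖) := by linarith
      _ ≤ (‖f' r‖ ^ 2 + (‖f r‖ / r) ^ 2) * r := hAM
      _ = K r := by simp only [hKdef, hnr]
  -- FTC bound
  have key : ∀ a b : ℝ, 0 < a → a ≤ b → |F b - F a| ≤ ∫ r in Ioc a b, K r := by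
    intro a b ha hab
    have hsub : Ioc a b ⊆ Ioi 0 := fun x hx => ha.trans hx.1
    have hmeas : AEStronglyMeasurable (fun r => 2 * (inner ℝ (f r) (f' r) : ℝ))
        (volume.restrict (Ioc a b)) := by
      have hfm : AEStronglyMeasurable f (volume.restrict (Ioc a b)) :=
        (hcont.mono hsub).aestronglyMeasurable measurableSet_Ioc
      have hdm : AEStronglyMeasurable (deriv f) (volume.restrict (Ioc a b)) :=
        (measurable_deriv f).aestronglyMeasurable
      have h : AEStronglyMeasurable (fun r => 2 * (inner ℝ (f r) (deriv f r) : ℝ))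
          (volume.restrict (Ioc a b)) := (hfm.inner hdm).const_mul 2
      refine h.congr ?_
      filter_upwards [ae_restrict_mem measurableSet_Ioc] with r hr
      rw [(hderiv r (hsub hr)).deriv]
    have hKab : IntegrableOn K (Ioc a b) volume := hKint.mono_set hsub
    have hgint : IntegrableOn (fun r => 2 * (inner ℝ (f r) (f' r) : ℝ)) (Ioc a b) volume := by
      refine hKab.mono' hmeas ?_
      filter_upwards [ae_restrict_mem measurableSet_Ioc] with r hr
      exact hbound r (hsub hr)
    have hgii : IntervalIntegrable (fun r => 2 * (inner ℝ (f r) (f' r) : ℝ)) volume a b :=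
      (intervalIntegrable_iff_integrableOn_Ioc_of_le hab).2 hgint
    have hKii : IntervalIntegrable K volume a b :=
      (intervalIntegrable_iff_integrableOn_Ioc_of_le hab).2 hKab
    have hftc : ∫ r in a..b, 2 * (inner ℝ (f r) (f' r) : ℝ) = F b - F a := by
      refine intervalIntegral.integral_eq_sub_of_hasDerivAt ?_ hgii
      intro r hr
      rw [uIcc_of_le hab] at hr
      exact (hderiv r (ha.trans_le hr.1)).norm_sq
    calc |F b - F a| = ‖∫ r in a..b, 2 * (inner ℝ (f r) (f' r) : ℝ)‖ := by
          rw [hftc, Real.norm_eq_abs]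
      _ ≤ ∫ r in a..b, ‖2 * (inner ℝ (f r) (f' r) : ℝ)‖ :=
          intervalIntegral.norm_integral_le_integral_norm hab
      _ ≤ ∫ r in a..b, K r := by
          refine intervalIntegral.integral_mono_on hab hgii.norm hKii ?_
          intro r hr
          exact hbound r (ha.trans_le hr.1)
      _ = ∫ r in Ioc a b, K r := intervalIntegral.integral_of_le hab
  -- monotonicity of set integrals of K
  have hmono : ∀ s t : Set ℝ, s ⊆ t → t ⊆ Ioi 0 → MeasurableSet t →
      ∫ r in s, K r ≤ ∫ r in t, K r := by
    intro s t hst ht hmt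
    refine setIntegral_mono_set (hKint.mono_set ht) ?_ (HasSubset.Subset.eventuallyLE hst)
    filter_upwards [ae_restrict_mem hmt] with r hr
    have hr0 : 0 < r := ht hr
    rw [hKdef]
    positivity
  -- tail integrals tend to zero
  have tendsto_tail : Filter.Tendsto (fun n : ℕ => ∫ r in Ioi ((n:ℝ)+1), K r)
      Filter.atTop (nhds 0) := by
    have hmain := tendsto_integral_filter_of_dominated_convergence
      (μ := volume.restrict (Ioi (0:ℝ))) (l := Filter.atTop)
      (F := fun n : ℕ => (Ioi ((n:ℝ)+1)).indicator K) (f := fun _ => (0:ℝ))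
      (bound := fun r => |K r|)
      (Filter.Eventually.of_forall fun n =>
        hKint.aestronglyMeasurable.indicator measurableSet_Ioi)
      (Filter.Eventually.of_forall fun n =>
        Filter.Eventually.of_forall fun r => norm_indicator_le_norm_self K r)
      hKint.norm
      (Filter.Eventually.of_forall fun r => by
        show Filter.Tendsto (fun n : ℕ => (Ioi ((n:ℝ)+1)).indicator K r) Filter.atTop (nhds 0)
        refine Filter.Tendsto.congr' ?_ tendsto_const_nhds
        filter_upwards [Filter.eventually_ge_atTop ⌈r⌉₊] with n hn
        refine (indicator_of_notMem ?_ K).symm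
        intro hmem
        have : r ≤ (n : ℝ) := (Nat.ceil_le.1 (le_refl ⌈r⌉₊)).trans (by exact_mod_cast hn)
        simp only [mem_Ioi] at hmem
        linarith)
    simp only [integral_zero] at hmain
    refine hmain.congr fun n => ?_
    have hss : Ioi ((n:ℝ)+1) ⊆ Ioi 0 := fun x hx => lt_trans (by positivity : (0:ℝ) < (n:ℝ)+1) hx
    rw [integral_indicator measurableSet_Ioi, Measure.restrict_restrict measurableSet_Ioi,
      inter_eq_left.2 hss]
  have tendsto_head : Filter.Tendsto (fun n : ℕ => ∫ r in Ioc 0 (1/((n:ℝ)+1)), K r)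
      Filter.atTop (nhds 0) := by
    have hmain := tendsto_integral_filter_of_dominated_convergence
      (μ := volume.restrict (Ioi (0:ℝ))) (l := Filter.atTop)
      (F := fun n : ℕ => (Ioc (0:ℝ) (1/((n:ℝ)+1))).indicator K) (f := fun _ => (0:ℝ))
      (bound := fun r => |K r|)
      (Filter.Eventually.of_forall fun n =>
        hKint.aestronglyMeasurable.indicator measurableSet_Ioc)
      (Filter.Eventually.of_forall fun n =>
        Filter.Eventually.of_forall fun r => norm_indicator_le_norm_self K r)
      hKint.norm
      (by
        filter_upwards [ae_restrict_mem measurableSet_Ioi] with r hr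
        show Filter.Tendsto (fun n : ℕ => (Ioc (0:ℝ) (1/((n:ℝ)+1))).indicator K r)
          Filter.atTop (nhds 0)
        refine Filter.Tendsto.congr' ?_ tendsto_const_nhds
        have hlt : ∀ᶠ n : ℕ in Filter.atTop, 1/((n:ℝ)+1) < r :=
          tendsto_one_div_add_atTop_nhds_zero_nat.eventually (gt_mem_nhds hr)
        filter_upwards [hlt] with n hn
        refine (indicator_of_notMem ?_ K).symm
        intro hmem
        exact absurd hmem.2 (not_le.2 hn))
    simp only [integral_zero] at hmain
    refine hmain.congr fun n => ?_
    rw [integral_indicator measurableSet_Ioc, Measure.restrict_restrict measurableSet_Ioc,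
      inter_eq_left.2 Ioc_subset_Ioi_self]
  -- F is Cauchy at infinity
  have habs : ∀ a b : ℝ, 0 < a → |F b - F a| = |F a - F b| := fun a b _ => abs_sub_comm _ _
  have hcauchy_top : Cauchy (Filter.map F Filter.atTop) := by
    rw [Metric.cauchy_iff]
    refine ⟨Filter.map_neBot, ?_⟩
    intro ε hε
    obtain ⟨N, hN⟩ := Filter.eventually_atTop.1 ((tendsto_order.1 tendsto_tail).2 ε hε)
    refine ⟨F '' Ici ((N:ℝ)+2), Filter.image_mem_map (Filter.Ici_mem_atTop _), ?_⟩
    have hkey : ∀ a b : ℝ, (N:ℝ)+2 ≤ a → a ≤ b → |F b - F a| < ε := by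
      intro a b ha hab
      have ha0 : (0:ℝ) < a := lt_of_lt_of_le (by positivity) ha
      refine lt_of_le_of_lt ((key a b ha0 hab).trans ?_) (hN N le_rfl)
      refine hmono _ _ ?_ (fun x (hx : x ∈ Ioi ((N:ℝ)+1)) => lt_trans (by positivity : (0:ℝ) < (N:ℝ)+1) hx) measurableSet_Ioi
      intro x hx
      exact lt_of_lt_of_le (by linarith) hx.1.le
    rintro x ⟨a, ha, rfl⟩ y ⟨b, hb, rfl⟩
    rw [Real.dist_eq]
    rcases le_total a b with h | h
    · rw [abs_sub_comm]; exact hkey a b ha h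
    · exact hkey b a hb h
  -- F is Cauchy at 0+
  have hcauchy_zero : Cauchy (Filter.map F (nhdsWithin 0 (Ioi 0))) := by
    rw [Metric.cauchy_iff]
    refine ⟨Filter.map_neBot, ?_⟩
    intro ε hε
    obtain ⟨N, hN⟩ := Filter.eventually_atTop.1 ((tendsto_order.1 tendsto_head).2 ε hε)
    have hδ : (0:ℝ) < 1/((N:ℝ)+1) := by positivity
    refine ⟨F '' Ioc 0 (1/((N:ℝ)+1)),
      Filter.image_mem_map (Ioc_mem_nhdsGT_of_mem ⟨le_rfl, hδ⟩), ?_⟩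
    have hkey : ∀ a b : ℝ, a ∈ Ioc (0:ℝ) (1/((N:ℝ)+1)) → b ∈ Ioc (0:ℝ) (1/((N:ℝ)+1)) →
        a ≤ b → |F b - F a| < ε := by
      intro a b ha hb hab
      refine lt_of_le_of_lt ((key a b ha.1 hab).trans ?_) (hN N le_rfl)
      refine hmono _ _ ?_ Ioc_subset_Ioi_self measurableSet_Ioc
      intro x hx
      exact ⟨ha.1.trans hx.1, hx.2.trans hb.2⟩
    rintro x ⟨a, ha, rfl⟩ y ⟨b, hb, rfl⟩
    rw [Real.dist_eq]
    rcases le_total a b with h | h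
    · rw [abs_sub_comm]; exact hkey a b ha hb h
    · exact hkey b a hb ha h
  obtain ⟨Linf, hLinf⟩ := CompleteSpace.complete hcauchy_top
  obtain ⟨Lzero, hLzero⟩ := CompleteSpace.complete hcauchy_zero
  have hTinf : Filter.Tendsto F Filter.atTop (nhds Linf) := hLinf
  have hTzero : Filter.Tendsto F (nhdsWithin 0 (Ioi 0)) (nhds Lzero) := hLzero
  -- nonnegativity of limits
  have hLinf_nonneg : 0 ≤ Linf := ge_of_tendsto' hTinf fun r => by positivity
  have hLzero_nonneg : 0 ≤ Lzero := ge_of_tendsto' hTzero fun r => by positivity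
  -- limits are zero
  have hLinf0 : Linf = 0 := by
    by_contra hne
    have hLpos : 0 < Linf := lt_of_le_of_ne hLinf_nonneg (Ne.symm hne)
    obtain ⟨R₀, hR₀⟩ := Filter.eventually_atTop.1
      ((tendsto_order.1 hTinf).1 (Linf/2) (half_lt_self hLpos))
    set R : ℝ := max R₀ 1 with hRdef
    have hR1 : (1:ℝ) ≤ R := le_max_right _ _
    have hRpos : (0:ℝ) < R := lt_of_lt_of_le zero_lt_one hR1
    have hsub : Ioi R ⊆ Ioi (0:ℝ) := fun x hx => hRpos.trans hx
    have hint : IntegrableOn (fun r : ℝ => Linf/2 * r⁻¹) (Ioi R) volume := by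
      refine (hfr_int.mono_set hsub).mono'
        ((measurable_const.mul measurable_inv).aestronglyMeasurable) ?_
      filter_upwards [ae_restrict_mem measurableSet_Ioi] with r hr
      have hr0 : 0 < r := hsub hr
      have hFge : Linf/2 ≤ F r := (hR₀ r ((le_max_left _ _).trans (le_of_lt hr))).le
      rw [Real.norm_of_nonneg (by positivity)]
      rw [hFr r hr0, div_eq_mul_inv]
      exact mul_le_mul_of_nonneg_right hFge (by positivity)
    have hinv : IntegrableOn (fun r : ℝ => r⁻¹) (Ioi R) volume := by
      have h := hint.const_mul ((Linf/2)⁻¹)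
      refine h.congr (Filter.Eventually.of_forall fun r => ?_)
      have hl : Linf/2 ≠ 0 := by positivity
      show (Linf/2)⁻¹ * (Linf/2 * r⁻¹) = r⁻¹
      rw [← mul_assoc, inv_mul_cancel₀ hl, one_mul]
    exact not_IntegrableOn_Ioi_inv hinv
  have hLzero0 : Lzero = 0 := by
    by_contra hne
    have hLpos : 0 < Lzero := lt_of_le_of_ne hLzero_nonneg (Ne.symm hne)
    obtain ⟨δ, hδmem, hδsub⟩ := mem_nhdsGT_iff_exists_Ioc_subset.1
      ((tendsto_order.1 hTzero).1 (Lzero/2) (half_lt_self hLpos))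
    have hδpos : (0:ℝ) < δ := hδmem
    have hsub : Ioc (0:ℝ) δ ⊆ Ioi (0:ℝ) := Ioc_subset_Ioi_self
    have hint : IntegrableOn (fun r : ℝ => Lzero/2 * r⁻¹) (Ioc 0 δ) volume := by
      refine (hfr_int.mono_set hsub).mono'
        ((measurable_const.mul measurable_inv).aestronglyMeasurable) ?_
      filter_upwards [ae_restrict_mem measurableSet_Ioc] with r hr
      have hr0 : 0 < r := hr.1
      have hFge : Lzero/2 ≤ F r := (hδsub hr).le
      rw [Real.norm_of_nonneg (by positivity)]
      rw [hFr r hr0, div_eq_mul_inv]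
      exact mul_le_mul_of_nonneg_right hFge (by positivity)
    have hinv : IntegrableOn (fun r : ℝ => r⁻¹) (Ioc 0 δ) volume := by
      have h := hint.const_mul ((Lzero/2)⁻¹)
      refine h.congr (Filter.Eventually.of_forall fun r => ?_)
      have hl : Lzero/2 ≠ 0 := by positivity
      show (Lzero/2)⁻¹ * (Lzero/2 * r⁻¹) = r⁻¹
      rw [← mul_assoc, inv_mul_cancel₀ hl, one_mul]
    have hii : IntervalIntegrable (fun r : ℝ => r⁻¹) volume 0 δ :=
      (intervalIntegrable_iff_integrableOn_Ioc_of_le hδpos.le).2 hinv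
    rcases intervalIntegrable_inv_iff.1 hii with h | h
    · exact hδpos.ne h
    · exact h left_mem_uIcc
  rw [hLinf0] at hTinf
  rw [hLzero0] at hTzero
  -- conclude
  have hnorm : ∀ {l : Filter ℝ}, Filter.Tendsto F l (nhds 0) →
      Filter.Tendsto f l (nhds 0) := by
    intro l hT
    rw [tendsto_zero_iff_norm_tendsto_zero]
    have h := (Real.continuous_sqrt.tendsto 0).comp hT
    rw [Real.sqrt_zero] at h
    refine h.congr fun r => ?_
    simp only [Function.comp_apply, hFdef]
    exact Real.sqrt_sq (norm_nonneg _)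
  exact ⟨hcont, hnorm hTzero, hnorm hTinf⟩
end

section
/- The space Ḣ¹_e embeds continuously into L^∞((0,∞)): there is a constant C such that for all f ∈ Ḣ¹_e, ‖f‖_{L^∞} ≤ C (‖∂_r f‖_{L²(r dr)} + ‖f/r‖_{L²(r dr)}). -/
open MeasureTheory Set
open scoped ENNReal NNReal

set_option maxHeartbeats 1000000 in
/-- The space `Ḣ¹_e` embeds continuously into `L^∞((0,∞))`: there is a constant `C` such that
`‖f‖_{L^∞} ≤ C (‖∂_r f‖_{L²(r dr)} + ‖f/r‖_{L²(r dr)})` for every `f ∈ Ḣ¹_e`. -/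
theorem stmt4 :
    ∃ C : ℝ, 0 < C ∧ ∀ (f f' : ℝ → ℂ),
      (∀ r ∈ Set.Ioi (0:ℝ), HasDerivAt f (f' r) r) →
      MemLp f' 2 muRad →
      MemLp (fun r => f r / (r : ℂ)) 2 muRad →
      ∀ r ∈ Set.Ioi (0:ℝ),
        ‖f r‖ ≤ C * ((eLpNorm f' 2 muRad).toReal
          + (eLpNorm (fun r => f r / (r : ℂ)) 2 muRad).toReal) := by
  refine ⟨1, one_pos, ?_⟩
  intro f f' hderiv hf' hfr r hr
  rw [Set.mem_Ioi] at hr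
  set q : ℝ → ℂ := fun t => f t / (t : ℂ) with hq
  have h20 : (2 : ℝ≥0∞) ≠ 0 := by norm_num
  have h2t : (2 : ℝ≥0∞) ≠ ⊤ := by norm_num
  have hqm : AEMeasurable (fun t => (‖q t‖₊ : ℝ≥0∞)) muRad :=
    hfr.aestronglyMeasurable.enorm
  have hf'm : AEMeasurable (fun t => (‖f' t‖₊ : ℝ≥0∞)) muRad :=
    hf'.aestronglyMeasurable.enorm
  -- Hölder / Cauchy-Schwarz
  have hconj : (2:ℝ).HolderConjugate 2 := Real.HolderConjugate.two_two
  have heq2 : ∀ (g : ℝ → ℂ), eLpNorm g 2 muRad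
      = (∫⁻ t, (‖g t‖₊ : ℝ≥0∞) ^ (2:ℝ) ∂muRad) ^ (1/(2:ℝ)) := by
    intro g
    rw [eLpNorm_eq_lintegral_rpow_enorm_toReal h20 h2t]
    norm_num
    rfl
  have hHolder : (∫⁻ t, (‖q t‖₊ : ℝ≥0∞) * ‖f' t‖₊ ∂muRad)
      ≤ eLpNorm q 2 muRad * eLpNorm f' 2 muRad := by
    have := ENNReal.lintegral_mul_le_Lp_mul_Lq muRad hconj hqm hf'm
    simpa [Pi.mul_apply, heq2 q, heq2 f'] using this
  have hItop : eLpNorm q 2 muRad * eLpNorm f' 2 muRad ≠ ⊤ :=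
    ENNReal.mul_ne_top hfr.2.ne hf'.2.ne
  -- transfer the weighted integral to Lebesgue measure
  have hwd : (∫⁻ t, (‖q t‖₊ : ℝ≥0∞) * ‖f' t‖₊ ∂muRad)
      = ∫⁻ t in Ioi (0:ℝ), ENNReal.ofReal t * ((‖q t‖₊ : ℝ≥0∞) * ‖f' t‖₊) ∂volume := by
    rw [muRad] at *
    rw [lintegral_withDensity_eq_lintegral_mul₀' (g := fun t => (‖q t‖₊ : ℝ≥0∞) * ‖f' t‖₊) ENNReal.measurable_ofReal.aemeasurable
      (hqm.mul hf'm)]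
    rfl
  have hpt : ∀ t ∈ Ioi (0:ℝ),
      ENNReal.ofReal t * ((‖q t‖₊ : ℝ≥0∞) * ‖f' t‖₊) = (‖f t‖₊ : ℝ≥0∞) * ‖f' t‖₊ := by
    intro t ht
    rw [Set.mem_Ioi] at ht
    have hnq : ‖q t‖ = ‖f t‖ / t := by
      rw [hq]
      simp only [norm_div, Complex.norm_real, Real.norm_eq_abs, abs_of_pos ht]
    have h1 : (‖q t‖₊ : ℝ≥0∞) = ENNReal.ofReal (‖f t‖ / t) := by
      rw [← enorm_eq_nnnorm, ← ofReal_norm, hnq]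
    rw [h1, ← mul_assoc, ← ENNReal.ofReal_mul ht.le, mul_div_cancel₀ _ ht.ne',
      ofReal_norm, enorm_eq_nnnorm]
  have hIoi0 : (∫⁻ t in Ioi (0:ℝ), (‖f t‖₊ : ℝ≥0∞) * ‖f' t‖₊ ∂volume)
      = ∫⁻ t, (‖q t‖₊ : ℝ≥0∞) * ‖f' t‖₊ ∂muRad := by
    rw [hwd]
    exact (setLIntegral_congr_fun measurableSet_Ioi hpt).symm
  set K : ℝ≥0∞ := ∫⁻ t in Ioi r, (‖f t‖₊ : ℝ≥0∞) * ‖f' t‖₊ ∂volume with hK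
  have hKle : K ≤ eLpNorm q 2 muRad * eLpNorm f' 2 muRad := by
    refine le_trans ?_ (hIoi0 ▸ hHolder)
    exact lintegral_mono_set (Ioi_subset_Ioi hr.le)
  have hKtop : K ≠ ⊤ := (lt_of_le_of_lt hKle (lt_top_iff_ne_top.mpr hItop)).ne
  -- measurability with respect to Lebesgue measure on (0,∞)
  have hcontf : ContinuousOn f (Ioi (0:ℝ)) :=
    fun x hx => ((hderiv x hx).continuousAt).continuousWithinAt
  have hfm : AEMeasurable f (volume.restrict (Ioi (0:ℝ))) :=
    hcontf.aemeasurable measurableSet_Ioi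
  have hf'vol : AEMeasurable f' (volume.restrict (Ioi (0:ℝ))) := by
    have hae : f' =ᵐ[volume.restrict (Ioi (0:ℝ))] deriv f := by
      rw [Filter.EventuallyEq, ae_restrict_iff' measurableSet_Ioi]
      exact Filter.Eventually.of_forall fun t ht => ((hderiv t ht).deriv).symm
    exact (measurable_deriv f).aemeasurable.congr hae.symm
  -- FTC step
  have hFTC : ∀ s : ℝ, r < s → ‖f r‖^2 ≤ ‖f s‖^2 + 2 * K.toReal := by
    intro s hs
    set φ : ℝ → ℝ := fun t => (inner ℝ (f t) (f' t) : ℝ) + (inner ℝ (f' t) (f t) : ℝ) with hφ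
    have hsub : Set.uIcc r s ⊆ Ioi (0:ℝ) := by
      rw [Set.uIcc_of_le hs.le]
      exact fun x hx => lt_of_lt_of_le hr hx.1
    have hderivg : ∀ t ∈ Set.uIcc r s,
        HasDerivAt (fun t => (inner ℝ (f t) (f t) : ℝ)) (φ t) t := by
      intro t ht
      exact (hderiv t (hsub ht)).inner ℝ (hderiv t (hsub ht))
    have hφle : ∀ t, |φ t| ≤ 2 * (‖f t‖ * ‖f' t‖) := by
      intro t
      calc |φ t| ≤ |(inner ℝ (f t) (f' t) : ℝ)| + |(inner ℝ (f' t) (f t) : ℝ)| := abs_add_le _ _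
        _ ≤ ‖f t‖ * ‖f' t‖ + ‖f' t‖ * ‖f t‖ :=
            add_le_add (abs_real_inner_le_norm _ _) (abs_real_inner_le_norm _ _)
        _ = 2 * (‖f t‖ * ‖f' t‖) := by ring
    have hsub2 : Ioc r s ⊆ Ioi (0:ℝ) := fun x hx => lt_trans hr hx.1
    have hmono : volume.restrict (Ioc r s) ≤ volume.restrict (Ioi (0:ℝ)) :=
      Measure.restrict_mono hsub2 le_rfl
    have hfmloc : AEMeasurable f (volume.restrict (Ioc r s)) := hfm.mono_measure hmono
    have hf'mloc : AEMeasurable f' (volume.restrict (Ioc r s)) := hf'vol.mono_measure hmono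
    have hφm : AEMeasurable φ (volume.restrict (Ioc r s)) := by
      apply AEMeasurable.add
      · exact (continuous_inner (𝕜 := ℝ) (E := ℂ)).measurable.comp_aemeasurable (hfmloc.prodMk hf'mloc)
      · exact (continuous_inner (𝕜 := ℝ) (E := ℂ)).measurable.comp_aemeasurable (hf'mloc.prodMk hfmloc)
    have hφnn : ∀ t, (‖φ t‖₊ : ℝ≥0∞) ≤ 2 * ((‖f t‖₊ : ℝ≥0∞) * ‖f' t‖₊) := by
      intro t
      rw [← enorm_eq_nnnorm, Real.enorm_eq_ofReal_abs]
      calc ENNReal.ofReal |φ t| ≤ ENNReal.ofReal (2 * (‖f t‖ * ‖f' t‖)) :=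
            ENNReal.ofReal_le_ofReal (hφle t)
        _ = 2 * ((‖f t‖₊ : ℝ≥0∞) * ‖f' t‖₊) := by
            rw [ENNReal.ofReal_mul (by norm_num), ENNReal.ofReal_mul (norm_nonneg _),
              ofReal_norm, ofReal_norm, enorm_eq_nnnorm, enorm_eq_nnnorm]
            norm_num
    have hlint : (∫⁻ t in Ioc r s, (‖φ t‖₊ : ℝ≥0∞) ∂volume) ≤ 2 * K := by
      calc (∫⁻ t in Ioc r s, (‖φ t‖₊ : ℝ≥0∞) ∂volume)
          ≤ ∫⁻ t in Ioc r s, 2 * ((‖f t‖₊ : ℝ≥0∞) * ‖f' t‖₊) ∂volume :=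
            lintegral_mono fun t => hφnn t
        _ ≤ ∫⁻ t in Ioi r, 2 * ((‖f t‖₊ : ℝ≥0∞) * ‖f' t‖₊) ∂volume :=
            lintegral_mono_set Ioc_subset_Ioi_self
        _ = 2 * K := lintegral_const_mul' 2 _ (by norm_num)
    have h2Ktop : (2 : ℝ≥0∞) * K ≠ ⊤ := ENNReal.mul_ne_top (by norm_num) hKtop
    have hφint : IntegrableOn φ (Ioc r s) volume := by
      refine ⟨hφm.aestronglyMeasurable, ?_⟩
      exact lt_of_le_of_lt hlint (lt_top_iff_ne_top.mpr h2Ktop)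
    have hφii : IntervalIntegrable φ volume r s := by
      rw [intervalIntegrable_iff, Set.uIoc_of_le hs.le]
      exact hφint
    have hftc := intervalIntegral.integral_eq_sub_of_hasDerivAt hderivg hφii
    rw [real_inner_self_eq_norm_sq, real_inner_self_eq_norm_sq] at hftc
    have habs : (∫ t in Ioc r s, |φ t| ∂volume) ≤ 2 * K.toReal := by
      rw [integral_eq_lintegral_of_nonneg_ae (Filter.Eventually.of_forall fun t => abs_nonneg (φ t))
        hφint.abs.aestronglyMeasurable]
      have : (∫⁻ t in Ioc r s, ENNReal.ofReal |φ t| ∂volume) ≤ 2 * K := by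
        refine le_trans (le_of_eq ?_) hlint
        refine lintegral_congr fun t => ?_
        rw [← enorm_eq_nnnorm, Real.enorm_eq_ofReal_abs]
      calc (∫⁻ t in Ioc r s, ENNReal.ofReal |φ t| ∂volume).toReal
          ≤ ((2:ℝ≥0∞) * K).toReal := ENNReal.toReal_mono h2Ktop this
        _ = 2 * K.toReal := by rw [ENNReal.toReal_mul]; norm_num
    have h1 : ‖f r‖^2 = ‖f s‖^2 - ∫ t in r..s, φ t := by rw [hftc]; ring
    have h2 : |∫ t in r..s, φ t| ≤ ∫ t in r..s, |φ t| :=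
      intervalIntegral.abs_integral_le_integral_abs hs.le
    have h3 : (∫ t in r..s, |φ t|) = ∫ t in Ioc r s, |φ t| ∂volume :=
      intervalIntegral.integral_of_le hs.le
    have h4 := neg_abs_le (∫ t in r..s, φ t)
    rw [h3] at h2
    linarith
  -- vanishing along a sequence to infinity
  have hvan : ∀ ε : ℝ, 0 < ε → ∃ s, r < s ∧ ‖f s‖^2 < ε := by
    intro ε hε
    by_contra hcon
    push_neg at hcon
    have hJfin : (∫⁻ t, (‖q t‖₊ : ℝ≥0∞) ^ (2:ℝ) ∂muRad) < ⊤ := by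
      have := hfr.2
      rw [heq2 q] at this
      by_contra hc
      push_neg at hc
      rw [top_le_iff.mp hc] at this
      simp [ENNReal.top_rpow_of_pos (by norm_num : (0:ℝ) < 1/2)] at this
    have hqm2 : AEMeasurable (fun t => (‖q t‖₊ : ℝ≥0∞) ^ (2:ℝ)) muRad :=
      hqm.pow_const _
    have hwd2 : (∫⁻ t, (‖q t‖₊ : ℝ≥0∞) ^ (2:ℝ) ∂muRad)
        = ∫⁻ t in Ioi (0:ℝ), ENNReal.ofReal t * ((‖q t‖₊ : ℝ≥0∞) ^ (2:ℝ)) ∂volume := by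
      rw [muRad] at *
      rw [lintegral_withDensity_eq_lintegral_mul₀' ENNReal.measurable_ofReal.aemeasurable hqm2]
      rfl
    have hinvtop : (∫⁻ t in Ioi r, ENNReal.ofReal t⁻¹ ∂volume) = ⊤ := by
      by_contra hc
      push_neg at hc
      have hint : IntegrableOn (fun t : ℝ => t⁻¹) (Ioi r) volume := by
        refine ⟨measurable_inv.aestronglyMeasurable, ?_⟩
        have : (∫⁻ t in Ioi r, (‖(t:ℝ)⁻¹‖₊ : ℝ≥0∞) ∂volume)
            = ∫⁻ t in Ioi r, ENNReal.ofReal t⁻¹ ∂volume := by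
          refine setLIntegral_congr_fun measurableSet_Ioi
            (fun t ht => ?_)
          rw [Set.mem_Ioi] at ht
          rw [← enorm_eq_nnnorm, Real.enorm_eq_ofReal_abs, abs_of_pos (inv_pos.mpr (lt_trans hr ht))]
        rw [HasFiniteIntegral]
        erw [this]
        exact lt_top_iff_ne_top.mpr hc
      have hint' : IntegrableOn (fun t : ℝ => t ^ (-1:ℝ)) (Ioi r) volume := by
        refine hint.congr_fun (fun t ht => ?_) measurableSet_Ioi
        rw [Real.rpow_neg_one]
      rw [integrableOn_Ioi_rpow_iff hr] at hint'
      linarith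
    have hlow : ∀ t ∈ Ioi r,
        ENNReal.ofReal ε * ENNReal.ofReal t⁻¹ ≤ ENNReal.ofReal t * ((‖q t‖₊ : ℝ≥0∞) ^ (2:ℝ)) := by
      intro t ht
      rw [Set.mem_Ioi] at ht
      have ht0 : (0:ℝ) < t := lt_trans hr ht
      have hnq : ‖q t‖ = ‖f t‖ / t := by
        rw [hq]
        simp only [norm_div, Complex.norm_real, Real.norm_eq_abs, abs_of_pos ht0]
      have h1 : (‖q t‖₊ : ℝ≥0∞) ^ (2:ℝ) = ENNReal.ofReal ((‖f t‖ / t) ^ (2:ℝ)) := by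
        rw [← enorm_eq_nnnorm, ← ofReal_norm, hnq,
          ← ENNReal.ofReal_rpow_of_nonneg (by positivity) (by norm_num)]
      have h2 : ((‖f t‖ / t) ^ (2:ℝ)) = ‖f t‖^2 / t^2 := by
        rw [Real.rpow_two, div_pow]
      rw [h1, h2, ← ENNReal.ofReal_mul ht0.le, ← ENNReal.ofReal_mul hε.le]
      apply ENNReal.ofReal_le_ofReal
      have h3 : t * (‖f t‖^2 / t^2) = ‖f t‖^2 / t := by
        field_simp
      rw [h3, div_eq_mul_inv]
      exact mul_le_mul_of_nonneg_right (hcon t ht) (by positivity)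
    have : (⊤ : ℝ≥0∞) ≤ ∫⁻ t, (‖q t‖₊ : ℝ≥0∞) ^ (2:ℝ) ∂muRad := by
      rw [hwd2]
      calc (⊤ : ℝ≥0∞) = ENNReal.ofReal ε * ∫⁻ t in Ioi r, ENNReal.ofReal t⁻¹ ∂volume := by
            rw [hinvtop, ENNReal.mul_top (ENNReal.ofReal_pos.mpr hε).ne']
        _ = ∫⁻ t in Ioi r, ENNReal.ofReal ε * ENNReal.ofReal t⁻¹ ∂volume :=
            (lintegral_const_mul' _ _ ENNReal.ofReal_ne_top).symm
        _ ≤ ∫⁻ t in Ioi r, ENNReal.ofReal t * ((‖q t‖₊ : ℝ≥0∞) ^ (2:ℝ)) ∂volume :=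
            setLIntegral_mono' measurableSet_Ioi hlow
        _ ≤ ∫⁻ t in Ioi (0:ℝ), ENNReal.ofReal t * ((‖q t‖₊ : ℝ≥0∞) ^ (2:ℝ)) ∂volume :=
            lintegral_mono_set (Ioi_subset_Ioi hr.le)
    exact absurd (top_le_iff.mp this) hJfin.ne
  -- conclude
  have hsq : ‖f r‖^2 ≤ 2 * K.toReal := by
    by_contra hc
    push_neg at hc
    obtain ⟨s, hs, hfs⟩ := hvan (‖f r‖^2 - 2 * K.toReal) (by linarith)
    have := hFTC s hs
    linarith
  have hKR : K.toReal ≤ (eLpNorm q 2 muRad).toReal * (eLpNorm f' 2 muRad).toReal := by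
    rw [← ENNReal.toReal_mul]
    exact ENNReal.toReal_mono hItop hKle
  set A := (eLpNorm f' 2 muRad).toReal with hA
  set B := (eLpNorm q 2 muRad).toReal with hB
  have hA0 : 0 ≤ A := ENNReal.toReal_nonneg
  have hB0 : 0 ≤ B := ENNReal.toReal_nonneg
  have hsq2 : ‖f r‖^2 ≤ 2 * (B * A) := by linarith
  have hfin : ‖f r‖ ≤ A + B := by
    nlinarith [norm_nonneg (f r), sq_nonneg (A - B), sq_nonneg (‖f r‖ - (A + B)), mul_nonneg hA0 hB0]
  rw [one_mul]
  exact hfin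
end

section
/- Let u : ℝ² → S² ⊂ ℝ³ be a 1-equivariant map, u(r,θ) = e^{θR} ū(r), with finite energy E(u) = π ∫_0^∞ (|∂_r ū|² + r^{-2}(ū₁² + ū₂²)) r dr. Define W^± := ∂_r ū ± r^{-1} ū × (k⃗ × ū) (componentwise in ℝ³). Then E(u) = π ‖W^±‖²_{L²(r dr)} ∓ 2π(ū₃(∞) - ū₃(0)), where ū₃(0), ū₃(∞) denote the limits of the third component at 0 and ∞ (assumed to exist). -/
open MeasureTheory Set
open scoped ENNReal NNReal

lemma keyP (v v' : Fin 3 → ℝ) (r : ℝ) (hr : r ≠ 0)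
    (h1 : v 0^2 + v 1^2 + v 2^2 = 1)
    (h2 : v 0 * v' 0 + v 1 * v' 1 + v 2 * v' 2 = 0) :
    (∑ i, (v' i + (1/r) * (crossProduct v (crossProduct ![0,0,1] v)) i)^2) * r
      = ((∑ i, v' i^2) + (v 0^2 + v 1^2)/r^2) * r + 2 * v' 2 := by
  simp [crossProduct, Fin.sum_univ_three]
  field_simp
  linear_combination ((v 0^2 + v 1^2) + 2*r*v' 2) * h1 - 2*r*v 2 * h2

lemma keyM (v v' : Fin 3 → ℝ) (r : ℝ) (hr : r ≠ 0)
    (h1 : v 0^2 + v 1^2 + v 2^2 = 1)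
    (h2 : v 0 * v' 0 + v 1 * v' 1 + v 2 * v' 2 = 0) :
    (∑ i, (v' i - (1/r) * (crossProduct v (crossProduct ![0,0,1] v)) i)^2) * r
      = ((∑ i, v' i^2) + (v 0^2 + v 1^2)/r^2) * r - 2 * v' 2 := by
  simp [crossProduct, Fin.sum_univ_three]
  field_simp
  linear_combination ((v 0^2 + v 1^2) - 2*r*v' 2) * h1 + 2*r*v 2 * h2

/-- Energy identity for 1-equivariant maps `u(r,θ) = e^{θR} ū(r)` into `S²`:
with `W^± = ∂_r ū ± r⁻¹ ū × (k × ū)`, one has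
`E(u) = π ‖W^±‖²_{L²(r dr)} ∓ 2π(ū₃(∞) - ū₃(0))`. -/
theorem stmt9 (u u' : ℝ → Fin 3 → ℝ)
    (hsphere : ∀ r ∈ Set.Ioi (0:ℝ), ∑ i, (u r i) ^ 2 = 1)
    (hderiv : ∀ r ∈ Set.Ioi (0:ℝ), ∀ i, HasDerivAt (fun ρ => u ρ i) (u' r i) r)
    (a b : ℝ)
    (h0 : Filter.Tendsto (fun r => u r 2) (nhdsWithin 0 (Set.Ioi 0)) (nhds a))
    (hinf : Filter.Tendsto (fun r => u r 2) Filter.atTop (nhds b))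
    (hE : IntegrableOn
      (fun r => ((∑ i, (u' r i) ^ 2) + ((u r 0) ^ 2 + (u r 1) ^ 2) / r ^ 2) * r)
      (Set.Ioi 0)) :
    (Real.pi * ∫ r in Set.Ioi (0:ℝ),
        ((∑ i, (u' r i) ^ 2) + ((u r 0) ^ 2 + (u r 1) ^ 2) / r ^ 2) * r)
      = Real.pi * (∫ r in Set.Ioi (0:ℝ),
          (∑ i, (u' r i
            + (1 / r) * (crossProduct (u r) (crossProduct ![0, 0, 1] (u r))) i) ^ 2) * r)
        - 2 * Real.pi * (b - a) ∧
    (Real.pi * ∫ r in Set.Ioi (0:ℝ),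
        ((∑ i, (u' r i) ^ 2) + ((u r 0) ^ 2 + (u r 1) ^ 2) / r ^ 2) * r)
      = Real.pi * (∫ r in Set.Ioi (0:ℝ),
          (∑ i, (u' r i
            - (1 / r) * (crossProduct (u r) (crossProduct ![0, 0, 1] (u r))) i) ^ 2) * r)
        + 2 * Real.pi * (b - a) := by
  set f : ℝ → ℝ :=
    fun r => ((∑ i, (u' r i) ^ 2) + ((u r 0) ^ 2 + (u r 1) ^ 2) / r ^ 2) * r with hf
  -- orthogonality constraint from |u| = 1
  have hconstr : ∀ r ∈ Set.Ioi (0:ℝ),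
      u r 0 * u' r 0 + u r 1 * u' r 1 + u r 2 * u' r 2 = 0 := by
    intro r hr
    have hF : HasDerivAt (fun ρ => ∑ i, (u ρ i) ^ 2)
        (∑ i, 2 * u r i * u' r i) r := by
      have : HasDerivAt (fun ρ => ∑ i, (u ρ i) ^ 2)
          (∑ i, (2 * u r i ^ 1 * u' r i)) r :=
        HasDerivAt.fun_sum fun i _ => by
          simpa using (hderiv r hr i).fun_pow 2
      simpa using this
    have hconst : HasDerivAt (fun ρ => ∑ i, (u ρ i) ^ 2) 0 r := by
      have heq : (fun ρ => ∑ i, (u ρ i) ^ 2) =ᶠ[nhds r] fun _ => (1:ℝ) := by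
        filter_upwards [Ioi_mem_nhds hr] with ρ hρ using hsphere ρ hρ
      exact (hasDerivAt_const r (1:ℝ)).congr_of_eventuallyEq heq
    have := hF.unique hconst
    simp [Fin.sum_univ_three] at this
    linarith
  have hsph : ∀ r ∈ Set.Ioi (0:ℝ), u r 0 ^ 2 + u r 1 ^ 2 + u r 2 ^ 2 = 1 := by
    intro r hr
    have := hsphere r hr
    simpa [Fin.sum_univ_three] using this
  -- pointwise identities
  have hkeyP : ∀ r ∈ Set.Ioi (0:ℝ),
      (∑ i, (u' r i
        + (1 / r) * (crossProduct (u r) (crossProduct ![0, 0, 1] (u r))) i) ^ 2) * r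
      = f r + 2 * u' r 2 := fun r hr =>
    keyP (u r) (u' r) r (ne_of_gt hr) (hsph r hr) (hconstr r hr)
  have hkeyM : ∀ r ∈ Set.Ioi (0:ℝ),
      (∑ i, (u' r i
        - (1 / r) * (crossProduct (u r) (crossProduct ![0, 0, 1] (u r))) i) ^ 2) * r
      = f r - 2 * u' r 2 := fun r hr =>
    keyM (u r) (u' r) r (ne_of_gt hr) (hsph r hr) (hconstr r hr)
  -- integrability of u' · 2
  have meas2 : AEStronglyMeasurable (fun r => u' r 2)
      (volume.restrict (Set.Ioi (0:ℝ))) := by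
    refine (measurable_deriv (fun ρ => u ρ 2)).aestronglyMeasurable.congr ?_
    filter_upwards [ae_restrict_mem measurableSet_Ioi] with r hr
    exact (hderiv r hr 2).deriv
  have hbound : ∀ r ∈ Set.Ioi (0:ℝ), ‖u' r 2‖ ≤ ‖f r‖ := by
    intro r hr
    have hP : 0 ≤ f r + 2 * u' r 2 := by
      rw [← hkeyP r hr]
      have : (0:ℝ) ≤ ∑ i, (u' r i
          + (1 / r) * (crossProduct (u r) (crossProduct ![0, 0, 1] (u r))) i) ^ 2 :=
        Finset.sum_nonneg fun i _ => sq_nonneg _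
      exact mul_nonneg this (le_of_lt hr)
    have hM : 0 ≤ f r - 2 * u' r 2 := by
      rw [← hkeyM r hr]
      have : (0:ℝ) ≤ ∑ i, (u' r i
          - (1 / r) * (crossProduct (u r) (crossProduct ![0, 0, 1] (u r))) i) ^ 2 :=
        Finset.sum_nonneg fun i _ => sq_nonneg _
      exact mul_nonneg this (le_of_lt hr)
    rw [Real.norm_eq_abs, Real.norm_eq_abs, abs_le]
    constructor <;> [skip; skip] <;>
      · rcases abs_cases (f r) with ⟨h, _⟩ | ⟨h, _⟩ <;> linarith
  have hint2 : IntegrableOn (fun r => u' r 2) (Set.Ioi (0:ℝ)) := by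
    refine Integrable.mono hE meas2 ?_
    filter_upwards [ae_restrict_mem measurableSet_Ioi] with r hr
    exact hbound r hr
  -- FTC : ∫ u' · 2 = b - a
  have hFTC : (∫ r in Set.Ioi (0:ℝ), u' r 2) = b - a := by
    set g : ℝ → ℝ := fun r => if r ≤ 0 then a else u r 2 with hg
    have hg0 : g 0 = a := by simp [hg]
    have hgu : ∀ r ∈ Set.Ioi (0:ℝ), g r = u r 2 := by
      intro r hr; simp [hg, not_le.mpr (Set.mem_Ioi.mp hr)]
    have hgderiv : ∀ r ∈ Set.Ioi (0:ℝ), HasDerivAt g (u' r 2) r := by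
      intro r hr
      refine (hderiv r hr 2).congr_of_eventuallyEq ?_
      filter_upwards [Ioi_mem_nhds hr] with ρ hρ using hgu ρ hρ
    have hgcont : ContinuousWithinAt g (Set.Ici (0:ℝ)) 0 := by
      rw [ContinuousWithinAt, hg0]
      have : Set.Ici (0:ℝ) = Set.Ioi 0 ∪ {0} := (Set.Ioi_union_left).symm
      rw [this, nhdsWithin_union, nhdsWithin_singleton]
      rw [Filter.tendsto_sup]
      constructor
      · refine h0.congr' ?_
        filter_upwards [self_mem_nhdsWithin] with r hr using (hgu r hr).symm
      · rw [Filter.tendsto_pure_left]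
        intro s hs
        simpa [hg0] using mem_of_mem_nhds hs
    have hgtop : Filter.Tendsto g Filter.atTop (nhds b) := by
      refine hinf.congr' ?_
      filter_upwards [Filter.eventually_gt_atTop (0:ℝ)] with r hr using (hgu r hr).symm
    have := integral_Ioi_of_hasDerivAt_of_tendsto hgcont hgderiv hint2 hgtop
    rw [this, hg0]
  -- integral computation
  have hIP : (∫ r in Set.Ioi (0:ℝ),
      (∑ i, (u' r i
        + (1 / r) * (crossProduct (u r) (crossProduct ![0, 0, 1] (u r))) i) ^ 2) * r)
      = (∫ r in Set.Ioi (0:ℝ), f r) + 2 * (b - a) := by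
    rw [setIntegral_congr_fun measurableSet_Ioi hkeyP,
      integral_add hE (hint2.const_mul 2)]
    rw [show (∫ r in Set.Ioi (0:ℝ), 2 * u' r 2)
        = 2 * ∫ r in Set.Ioi (0:ℝ), u' r 2 from integral_const_mul 2 _, hFTC]
  have hIM : (∫ r in Set.Ioi (0:ℝ),
      (∑ i, (u' r i
        - (1 / r) * (crossProduct (u r) (crossProduct ![0, 0, 1] (u r))) i) ^ 2) * r)
      = (∫ r in Set.Ioi (0:ℝ), f r) - 2 * (b - a) := by
    rw [setIntegral_congr_fun measurableSet_Ioi hkeyM,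
      integral_sub hE (hint2.const_mul 2)]
    rw [show (∫ r in Set.Ioi (0:ℝ), 2 * u' r 2)
        = 2 * ∫ r in Set.Ioi (0:ℝ), u' r 2 from integral_const_mul 2 _, hFTC]
  constructor
  · rw [hIP]; ring
  · rw [hIM]; ring
end

section
/- Let ψ⁺, ψ⁻, ψ₂ : (0,∞) → ℂ and A₀, A₂ : (0,∞) → ℝ with ψ₂/r = (ψ⁺ - ψ⁻)/(2i), A₂(r) + 1 = -(1/4)∫_0^r (|ψ⁺|² - |ψ⁻|²) s ds, and A₀ = -(1/2)Re(\bar{ψ⁺}ψ⁻) - ∫_r^∞ Re(\bar{ψ⁺}ψ⁻)(s)/s ds. Then the nonlinearity N⁻(ψ⁻) = (A₀ - 2(A₂+1)/r² - r^{-1}Im(ψ₂ \bar{ψ⁻})) ψ⁻ satisfies ‖N⁻(ψ⁻)‖_{L^{4/3}(r dr)} ≲ ‖ψ⁺‖³_{L⁴(r dr)} + ‖ψ⁻‖³_{L⁴(r dr)}. -/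
open MeasureTheory Set
open scoped ENNReal NNReal

section HelperLemmas
open Real

lemma muRad_lint (f : ℝ → ℝ≥0∞) :
    ∫⁻ r, f r ∂muRad = ∫⁻ r in Ioi (0:ℝ), f r * ENNReal.ofReal r := by
  rw [muRad, lintegral_withDensity_eq_lintegral_mul_non_measurable _
    ENNReal.measurable_ofReal (ae_of_all _ fun x => ENNReal.ofReal_lt_top)]
  simp [mul_comm]

lemma rp2' (x : ℝ≥0∞) : x ^ (2:ℝ) = x * x := by
  rw [show (2:ℝ) = ((2:ℕ):ℝ) by norm_num, ENNReal.rpow_natCast, sq]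

lemma rp4' (x : ℝ≥0∞) : x ^ (4:ℝ) = x * x * (x * x) := by
  rw [show (4:ℝ) = ((4:ℕ):ℝ) by norm_num, ENNReal.rpow_natCast]
  ring

lemma sq_add_le (a b : ℝ≥0∞) : (a + b) ^ (2:ℝ) ≤ 4 * (a ^ (2:ℝ) + b ^ (2:ℝ)) := by
  rw [rp2', rp2', rp2']
  rcases le_total a b with h | h
  · calc (a+b)*(a+b) ≤ (b+b)*(b+b) := mul_le_mul' (add_le_add_left h _) (add_le_add_left h _)
      _ = 4*(b*b) := by ring
      _ ≤ 4*(a*a+b*b) := by exact mul_le_mul_right le_add_self _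
  · calc (a+b)*(a+b) ≤ (a+a)*(a+a) := mul_le_mul' (add_le_add_right h _) (add_le_add_right h _)
      _ = 4*(a*a) := by ring
      _ ≤ 4*(a*a+b*b) := by exact mul_le_mul_right le_self_add _

lemma sq_mul_sq_le (a b : ℝ≥0∞) : a ^ (2:ℝ) * b ^ (2:ℝ) ≤ a ^ (4:ℝ) + b ^ (4:ℝ) := by
  rw [rp2', rp2', rp4', rp4']
  rcases le_total a b with h | h
  · exact le_add_left (mul_le_mul' (mul_le_mul' h h) le_rfl)
  · exact le_add_right (mul_le_mul' le_rfl (mul_le_mul' h h))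

lemma step {μ : Measure ℝ} (X Y : ℝ → ℝ≥0∞) (hX : AEMeasurable X μ) (hY : AEMeasurable Y μ) :
    (∫⁻ r, (X r * Y r) ^ (4/3:ℝ) ∂μ) ^ (3/4:ℝ)
      ≤ (∫⁻ r, X r ^ (2:ℝ) ∂μ) ^ (1/2:ℝ) * (∫⁻ r, Y r ^ (4:ℝ) ∂μ) ^ (1/4:ℝ) := by
  have hpq : Real.HolderConjugate (3/2) 3 := ⟨by norm_num, by norm_num, by norm_num⟩
  have hXm : AEMeasurable (fun r => X r ^ (4/3:ℝ)) μ := hX.pow_const _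
  have hYm : AEMeasurable (fun r => Y r ^ (4/3:ℝ)) μ := hY.pow_const _
  have h := ENNReal.lintegral_mul_le_Lp_mul_Lq μ hpq hXm hYm
  have e1 : ∀ r, (X r ^ (4/3:ℝ)) ^ (3/2:ℝ) = X r ^ (2:ℝ) := by
    intro r; rw [← ENNReal.rpow_mul]; norm_num
  have e2 : ∀ r, (Y r ^ (4/3:ℝ)) ^ (3:ℝ) = Y r ^ (4:ℝ) := by
    intro r; rw [← ENNReal.rpow_mul]; norm_num
  simp_rw [e1, e2] at h
  calc (∫⁻ r, (X r * Y r) ^ (4/3:ℝ) ∂μ) ^ (3/4:ℝ)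
      = (∫⁻ r, X r ^ (4/3:ℝ) * Y r ^ (4/3:ℝ) ∂μ) ^ (3/4:ℝ) := by
        simp_rw [ENNReal.mul_rpow_of_nonneg _ _ (by norm_num : (0:ℝ) ≤ 4/3)]
    _ ≤ ((∫⁻ r, X r ^ (2:ℝ) ∂μ) ^ (1/(3/2):ℝ) * (∫⁻ r, Y r ^ (4:ℝ) ∂μ) ^ (1/3:ℝ)) ^ (3/4:ℝ) :=
        ENNReal.rpow_le_rpow h (by norm_num)
    _ = (∫⁻ r, X r ^ (2:ℝ) ∂μ) ^ (1/2:ℝ) * (∫⁻ r, Y r ^ (4:ℝ) ∂μ) ^ (1/4:ℝ) := by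
        rw [ENNReal.mul_rpow_of_nonneg _ _ (by norm_num : (0:ℝ) ≤ 3/4),
          ← ENNReal.rpow_mul, ← ENNReal.rpow_mul]
        norm_num

lemma ennnorm_eq_ofReal_abs' (r : ℝ) : (‖r‖₊ : ℝ≥0∞) = ENNReal.ofReal |r| :=
  Real.enorm_eq_ofReal_abs r

lemma ofReal_norm_eq_coe_nnnorm {E : Type*} [SeminormedAddGroup E] (a : E) :
    ENNReal.ofReal ‖a‖ = (‖a‖₊ : ℝ≥0∞) :=
  ofReal_norm a

lemma ofReal_half : ENNReal.ofReal (1/2 : ℝ) = 2⁻¹ := by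
  rw [show (1/2:ℝ) = 2⁻¹ by norm_num, ENNReal.ofReal_inv_of_pos two_pos]
  norm_num

lemma ofReal_inv2 : ENNReal.ofReal (2⁻¹ : ℝ) = 2⁻¹ := by
  rw [ENNReal.ofReal_inv_of_pos two_pos]; norm_num

lemma boundA (ψp ψm : ℝ → ℂ) (r : ℝ) (hr : 0 < r) :
    (‖-(1/2) * ((starRingEnd ℂ) (ψp r) * ψm r).re
       - ∫ s in Set.Ioi r, ((starRingEnd ℂ) (ψp s) * ψm s).re / s‖₊ : ℝ≥0∞)
      ≤ 2⁻¹ * ((‖ψp r‖₊ : ℝ≥0∞) * ‖ψm r‖₊)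
        + ∫⁻ s in Ioi r, (‖ψp s‖₊ : ℝ≥0∞) * ‖ψm s‖₊ * ENNReal.ofReal s⁻¹ := by
  have tri : (‖-(1/2) * ((starRingEnd ℂ) (ψp r) * ψm r).re
       - ∫ s in Set.Ioi r, ((starRingEnd ℂ) (ψp s) * ψm s).re / s‖₊ : ℝ≥0∞)
      ≤ (‖-(1/2) * ((starRingEnd ℂ) (ψp r) * ψm r).re‖₊ : ℝ≥0∞)
        + (‖∫ s in Set.Ioi r, ((starRingEnd ℂ) (ψp s) * ψm s).re / s‖₊ : ℝ≥0∞) := by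
    exact_mod_cast nnnorm_sub_le _ _
  refine le_trans tri (add_le_add ?_ ?_)
  · rw [ennnorm_eq_ofReal_abs']
    have habs : |(-(1/2)) * ((starRingEnd ℂ) (ψp r) * ψm r).re| ≤ 1/2 * (‖ψp r‖ * ‖ψm r‖) := by
      rw [abs_mul, abs_neg, abs_of_pos (by norm_num : (0:ℝ) < 1/2)]
      refine mul_le_mul_of_nonneg_left ?_ (by norm_num)
      calc |((starRingEnd ℂ) (ψp r) * ψm r).re| ≤ ‖(starRingEnd ℂ) (ψp r) * ψm r‖ :=
            Complex.abs_re_le_norm _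
        _ = ‖ψp r‖ * ‖ψm r‖ := by rw [norm_mul, RCLike.norm_conj]
    refine le_trans (ENNReal.ofReal_le_ofReal habs) ?_
    rw [ENNReal.ofReal_mul (by norm_num), ENNReal.ofReal_mul (norm_nonneg _),
      ofReal_half, ofReal_norm_eq_coe_nnnorm, ofReal_norm_eq_coe_nnnorm]
  · refine le_trans (enorm_integral_le_lintegral_enorm _) ?_
    refine setLIntegral_mono' measurableSet_Ioi fun s hs => ?_
    have hs0 : (0:ℝ) < s := hr.trans hs
    rw [Real.enorm_eq_ofReal_abs, abs_div, abs_of_pos hs0, div_eq_mul_inv,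
      ENNReal.ofReal_mul (abs_nonneg _)]
    refine mul_le_mul_left ?_ _
    calc ENNReal.ofReal |((starRingEnd ℂ) (ψp s) * ψm s).re|
        ≤ ENNReal.ofReal (‖ψp s‖ * ‖ψm s‖) := ENNReal.ofReal_le_ofReal (by
          calc |((starRingEnd ℂ) (ψp s) * ψm s).re| ≤ ‖(starRingEnd ℂ) (ψp s) * ψm s‖ :=
              Complex.abs_re_le_norm _
            _ = ‖ψp s‖ * ‖ψm s‖ := by rw [norm_mul, RCLike.norm_conj])
      _ = (‖ψp s‖₊ : ℝ≥0∞) * ‖ψm s‖₊ := by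
          rw [ENNReal.ofReal_mul (norm_nonneg _), ofReal_norm_eq_coe_nnnorm,
            ofReal_norm_eq_coe_nnnorm]

lemma boundB (ψp ψm : ℝ → ℂ) (A₂ : ℝ → ℝ) (r : ℝ) (hr : 0 < r)
    (h2 : A₂ r + 1 = -(1/4) * ∫ s in Set.Ioo (0:ℝ) r, (‖ψp s‖ ^ 2 - ‖ψm s‖ ^ 2) * s) :
    (‖2 * (A₂ r + 1) / r ^ 2‖₊ : ℝ≥0∞)
      ≤ 2⁻¹ * ENNReal.ofReal (r ^ (-2:ℝ)) *
        ∫⁻ s in Ioo (0:ℝ) r,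
          ((‖ψp s‖₊ : ℝ≥0∞) ^ (2:ℝ) + (‖ψm s‖₊ : ℝ≥0∞) ^ (2:ℝ)) * ENNReal.ofReal s := by
  have h4 : 2 * (A₂ r + 1) / r ^ 2
      = -(2⁻¹ * (r ^ 2)⁻¹ * ∫ s in Set.Ioo (0:ℝ) r, (‖ψp s‖ ^ 2 - ‖ψm s‖ ^ 2) * s) := by
    rw [h2]; ring
  have hrp : (r ^ 2 : ℝ)⁻¹ = r ^ (-2:ℝ) := by
    rw [Real.rpow_neg hr.le, show (2:ℝ) = ((2:ℕ):ℝ) by norm_num, Real.rpow_natCast]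
  have habs : |2 * (A₂ r + 1) / r ^ 2|
      = 2⁻¹ * r ^ (-2:ℝ) * |∫ s in Set.Ioo (0:ℝ) r, (‖ψp s‖ ^ 2 - ‖ψm s‖ ^ 2) * s| := by
    rw [h4, abs_neg, abs_mul, abs_mul, abs_of_nonneg (by norm_num : (0:ℝ) ≤ 2⁻¹),
      abs_of_nonneg (inv_nonneg.2 (sq_nonneg r)), hrp]
  rw [ennnorm_eq_ofReal_abs', habs, ENNReal.ofReal_mul (by positivity),
    ENNReal.ofReal_mul (by norm_num), ofReal_inv2]
  refine mul_le_mul_right ?_ _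
  rw [← Real.enorm_eq_ofReal_abs]
  refine le_trans (enorm_integral_le_lintegral_enorm _) ?_
  refine setLIntegral_mono' measurableSet_Ioo fun s hs => ?_
  rw [Real.enorm_eq_ofReal_abs, abs_mul, abs_of_pos hs.1, ENNReal.ofReal_mul (abs_nonneg _)]
  refine mul_le_mul_left ?_ _
  have h1 : |‖ψp s‖ ^ 2 - ‖ψm s‖ ^ 2| ≤ ‖ψp s‖ ^ 2 + ‖ψm s‖ ^ 2 := by
    refine (abs_sub _ _).trans ?_
    rw [abs_of_nonneg (by positivity : (0:ℝ) ≤ ‖ψp s‖ ^ 2),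
      abs_of_nonneg (by positivity : (0:ℝ) ≤ ‖ψm s‖ ^ 2)]
  refine le_trans (ENNReal.ofReal_le_ofReal h1) ?_
  rw [ENNReal.ofReal_add (by positivity) (by positivity)]
  refine add_le_add ?_ ?_ <;>
    rw [sq, ENNReal.ofReal_mul (norm_nonneg _), ofReal_norm_eq_coe_nnnorm, rp2']

lemma boundC (ψp ψm ψ₂ : ℝ → ℂ) (r : ℝ) (hr : 0 < r)
    (h2 : ψ₂ r / (r : ℂ) = (ψp r - ψm r) / (2 * Complex.I)) :
    (‖(ψ₂ r * (starRingEnd ℂ) (ψm r)).im / r‖₊ : ℝ≥0∞)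
      ≤ 2⁻¹ * (((‖ψp r‖₊ : ℝ≥0∞) + ‖ψm r‖₊) * ‖ψm r‖₊) := by
  have key : (ψ₂ r * (starRingEnd ℂ) (ψm r)).im / r
      = (((ψp r - ψm r) / (2 * Complex.I)) * (starRingEnd ℂ) (ψm r)).im := by
    rw [← Complex.div_ofReal_im, mul_div_right_comm, h2]
  rw [key, ennnorm_eq_ofReal_abs']
  have habs : |(((ψp r - ψm r) / (2 * Complex.I)) * (starRingEnd ℂ) (ψm r)).im|
      ≤ 1/2 * ((‖ψp r‖ + ‖ψm r‖) * ‖ψm r‖) := by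
    calc |(((ψp r - ψm r) / (2 * Complex.I)) * (starRingEnd ℂ) (ψm r)).im|
        ≤ ‖((ψp r - ψm r) / (2 * Complex.I)) * (starRingEnd ℂ) (ψm r)‖ :=
          Complex.abs_im_le_norm _
      _ = ‖ψp r - ψm r‖ / 2 * ‖ψm r‖ := by
          rw [norm_mul, RCLike.norm_conj, norm_div, norm_mul, Complex.norm_I,
            Complex.norm_ofNat, mul_one]
      _ ≤ (‖ψp r‖ + ‖ψm r‖) / 2 * ‖ψm r‖ := by
          gcongr
          exact norm_sub_le _ _
      _ = 1/2 * ((‖ψp r‖ + ‖ψm r‖) * ‖ψm r‖) := by ring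
  refine le_trans (ENNReal.ofReal_le_ofReal habs) ?_
  rw [ENNReal.ofReal_mul (by norm_num), ofReal_half,
    ENNReal.ofReal_mul (by positivity), ENNReal.ofReal_add (norm_nonneg _) (norm_nonneg _),
    ofReal_norm_eq_coe_nnnorm, ofReal_norm_eq_coe_nnnorm]

lemma lint_Ioi_rpow {a : ℝ} (ha : a < -1) {c : ℝ} (hc : 0 < c) :
    ∫⁻ s in Ioi c, ENNReal.ofReal (s ^ a) = ENNReal.ofReal (-c ^ (a+1) / (a+1)) := by
  rw [← ofReal_integral_eq_lintegral_ofReal (integrableOn_Ioi_rpow_of_lt ha hc)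
    ((ae_restrict_iff' measurableSet_Ioi).2 (ae_of_all _ fun s hs =>
      Real.rpow_nonneg (le_of_lt (hc.trans hs)) a)),
    integral_Ioi_rpow_of_lt ha hc]

lemma lint_Ioo_rpow {a : ℝ} (ha : -1 < a) {c : ℝ} (hc : 0 < c) :
    ∫⁻ s in Ioo 0 c, ENNReal.ofReal (s ^ a) = ENNReal.ofReal (c ^ (a+1) / (a+1)) := by
  have hi : IntegrableOn (fun s : ℝ => s ^ a) (Ioo 0 c) := by
    have := (intervalIntegral.intervalIntegrable_rpow' (a := 0) (b := c) ha)
    rw [intervalIntegrable_iff_integrableOn_Ioo_of_le hc.le] at this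
    exact this
  rw [← ofReal_integral_eq_lintegral_ofReal hi
    ((ae_restrict_iff' measurableSet_Ioo).2 (ae_of_all _ fun s hs =>
      Real.rpow_nonneg hs.1.le a))]
  open intervalIntegral in
  rw [← integral_Ioc_eq_integral_Ioo, ← integral_of_le hc.le, integral_rpow (Or.inl ha)]
  norm_num [Real.zero_rpow (by linarith : a + 1 ≠ 0)]

lemma lint_CS {α : Type*} [MeasurableSpace α] (μ : Measure α) (f g : α → ℝ≥0∞)
    (hf : AEMeasurable f μ) (hg : AEMeasurable g μ) :
    (∫⁻ a, f a * g a ∂μ) ^ (2:ℝ) ≤ (∫⁻ a, f a ^ (2:ℝ) ∂μ) * (∫⁻ a, g a ^ (2:ℝ) ∂μ) := by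
  have hpq : Real.HolderConjugate 2 2 := ⟨by norm_num, by norm_num, by norm_num⟩
  have h := ENNReal.lintegral_mul_le_Lp_mul_Lq μ hpq hf hg
  calc (∫⁻ a, f a * g a ∂μ) ^ (2:ℝ)
      ≤ ((∫⁻ a, f a ^ (2:ℝ) ∂μ) ^ (1/2:ℝ) * (∫⁻ a, g a ^ (2:ℝ) ∂μ) ^ (1/2:ℝ)) ^ (2:ℝ) := by
        exact ENNReal.rpow_le_rpow h (by norm_num)
    _ = (∫⁻ a, f a ^ (2:ℝ) ∂μ) * (∫⁻ a, g a ^ (2:ℝ) ∂μ) := by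
        rw [ENNReal.mul_rpow_of_nonneg _ _ (by norm_num : (0:ℝ) ≤ 2),
          ← ENNReal.rpow_mul, ← ENNReal.rpow_mul]
        norm_num

lemma lint_swap (F G : ℝ → ℝ≥0∞) (hF : Measurable F) (hG : Measurable G) :
    ∫⁻ r in Ioi (0:ℝ), G r * ∫⁻ s in Ioi r, F s
      = ∫⁻ s in Ioi (0:ℝ), F s * ∫⁻ r in Ioo 0 s, G r := by
  set T : Set (ℝ × ℝ) := {p : ℝ × ℝ | 0 < p.1 ∧ p.1 < p.2} with hT
  have hTm : MeasurableSet T := by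
    apply MeasurableSet.inter
    · exact measurableSet_lt measurable_const measurable_fst
    · exact measurableSet_lt measurable_fst measurable_snd
  set H : ℝ × ℝ → ℝ≥0∞ := T.indicator (fun p => G p.1 * F p.2) with hH
  have hHm : Measurable H := ((hG.comp measurable_fst).mul (hF.comp measurable_snd)).indicator hTm
  have stepA : ∀ r : ℝ, ∫⁻ s, H (r, s) = (Ioi (0:ℝ)).indicator
      (fun r => G r * ∫⁻ s in Ioi r, F s) r := by
    intro r
    by_cases hr : 0 < r
    · have : (fun s => H (r, s)) = (Ioi r).indicator (fun s => G r * F s) := by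
        funext s
        simp only [hH, hT, Set.indicator, mem_setOf_eq, mem_Ioi, hr, true_and]
      rw [this, lintegral_indicator measurableSet_Ioi _, lintegral_const_mul _ hF,
        Set.indicator_of_mem (by exact hr)]
    · have : (fun s => H (r, s)) = fun _ => 0 := by
        funext s
        simp only [hH, hT, Set.indicator, mem_setOf_eq]
        rw [if_neg (by tauto)]
      rw [this, lintegral_zero, Set.indicator_of_notMem (by exact hr)]
  have stepB : ∀ s : ℝ, ∫⁻ r, H (r, s) = (Ioi (0:ℝ)).indicator
      (fun s => F s * ∫⁻ r in Ioo 0 s, G r) s := by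
    intro s
    have : (fun r => H (r, s)) = (Ioo 0 s).indicator (fun r => G r * F s) := by
      funext r
      simp only [hH, hT, Set.indicator, mem_setOf_eq, mem_Ioo]
    rw [this, lintegral_indicator measurableSet_Ioo _, lintegral_mul_const _ hG]
    by_cases hs : 0 < s
    · rw [Set.indicator_of_mem (by exact hs), mul_comm]
    · rw [Set.indicator_of_notMem (by exact hs)]
      have : Ioo (0:ℝ) s = ∅ := Ioo_eq_empty (by linarith [not_lt.mp hs])
      simp [this]
  calc ∫⁻ r in Ioi (0:ℝ), G r * ∫⁻ s in Ioi r, F s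
      = ∫⁻ r, (Ioi (0:ℝ)).indicator (fun r => G r * ∫⁻ s in Ioi r, F s) r := by
        rw [lintegral_indicator measurableSet_Ioi _]
    _ = ∫⁻ r, ∫⁻ s, H (r, s) := by simp_rw [stepA]
    _ = ∫⁻ s, ∫⁻ r, H (r, s) := by
        rw [lintegral_lintegral_swap]
        exact hHm.aemeasurable
    _ = ∫⁻ s, (Ioi (0:ℝ)).indicator (fun s => F s * ∫⁻ r in Ioo 0 s, G r) s := by
        simp_rw [stepB]
    _ = ∫⁻ s in Ioi (0:ℝ), F s * ∫⁻ r in Ioo 0 s, G r := by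
        rw [lintegral_indicator measurableSet_Ioi _]

/-- Dual Hardy inequality. -/
lemma hardy_dual (h : ℝ → ℝ≥0∞) (hm : Measurable h) :
    ∫⁻ r in Ioi (0:ℝ), (∫⁻ s in Ioi r, h s * ENNReal.ofReal s⁻¹) ^ (2:ℝ) * ENNReal.ofReal r
      ≤ ∫⁻ s in Ioi (0:ℝ), (h s) ^ (2:ℝ) * ENNReal.ofReal s := by
  have key : ∀ r : ℝ, 0 < r →
      (∫⁻ s in Ioi r, h s * ENNReal.ofReal s⁻¹) ^ (2:ℝ) * ENNReal.ofReal r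
        ≤ ∫⁻ s in Ioi r, (h s) ^ (2:ℝ) := by
    intro r hr
    have cs := lint_CS (volume.restrict (Ioi r)) h (fun s => ENNReal.ofReal s⁻¹)
      hm.aemeasurable (by fun_prop)
    have e2 : ∫⁻ s in Ioi r, (ENNReal.ofReal s⁻¹) ^ (2:ℝ) = ENNReal.ofReal r⁻¹ := by
      have ept : ∀ s ∈ Ioi r, (ENNReal.ofReal s⁻¹) ^ (2:ℝ) = ENNReal.ofReal (s ^ (-2:ℝ)) := by
        intro s hs
        have hs0 : 0 < s := hr.trans hs
        rw [ENNReal.ofReal_rpow_of_pos (inv_pos.2 hs0), ← Real.rpow_neg_one s,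
          ← Real.rpow_mul hs0.le]
        norm_num
      rw [setLIntegral_congr_fun measurableSet_Ioi ept,
        lint_Ioi_rpow (by norm_num) hr]
      have h1 : (-2:ℝ) + 1 = -1 := by norm_num
      rw [h1, Real.rpow_neg_one]
      norm_num
    calc (∫⁻ s in Ioi r, h s * ENNReal.ofReal s⁻¹) ^ (2:ℝ) * ENNReal.ofReal r
        ≤ (∫⁻ s in Ioi r, (h s) ^ (2:ℝ)) * ENNReal.ofReal r⁻¹ * ENNReal.ofReal r := by
          rw [e2] at cs
          exact mul_le_mul_left cs _
      _ = (∫⁻ s in Ioi r, (h s) ^ (2:ℝ)) * 1 := by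
          rw [mul_assoc, ← ENNReal.ofReal_mul (by positivity), inv_mul_cancel₀ hr.ne',
            ENNReal.ofReal_one]
      _ = ∫⁻ s in Ioi r, (h s) ^ (2:ℝ) := mul_one _
  calc ∫⁻ r in Ioi (0:ℝ), (∫⁻ s in Ioi r, h s * ENNReal.ofReal s⁻¹) ^ (2:ℝ) * ENNReal.ofReal r
      ≤ ∫⁻ r in Ioi (0:ℝ), 1 * ∫⁻ s in Ioi r, (h s) ^ (2:ℝ) := by
        refine setLIntegral_mono' measurableSet_Ioi fun r hr => ?_
        rw [one_mul]; exact key r hr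
    _ = ∫⁻ s in Ioi (0:ℝ), (h s) ^ (2:ℝ) * ∫⁻ r in Ioo 0 s, (1:ℝ≥0∞) := by
        exact lint_swap _ _ (hm.pow_const _) measurable_const
    _ = ∫⁻ s in Ioi (0:ℝ), (h s) ^ (2:ℝ) * ENNReal.ofReal s := by
        refine setLIntegral_congr_fun measurableSet_Ioi (fun s hs => ?_)
        rw [lintegral_const, Measure.restrict_apply MeasurableSet.univ, univ_inter,
          Real.volume_Ioo, one_mul, sub_zero]

/-- Forward Hardy inequality. -/
lemma hardy_fwd (g : ℝ → ℝ≥0∞) (hg : Measurable g) :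
    ∫⁻ r in Ioi (0:ℝ),
        (∫⁻ s in Ioo 0 r, g s * ENNReal.ofReal s) ^ (2:ℝ) * ENNReal.ofReal (r ^ (-3:ℝ))
      ≤ 2 * ∫⁻ s in Ioi (0:ℝ), (g s) ^ (2:ℝ) * ENNReal.ofReal s := by
  set F' : ℝ → ℝ≥0∞ := fun s => (g s) ^ (2:ℝ) * ENNReal.ofReal (s ^
    ((3:ℝ)/2)) with hF'
  set G' : ℝ → ℝ≥0∞ := fun r => ENNReal.ofReal (2/3 * r ^ (-(3:ℝ)/2)) with hG'
  have hF'm : Measurable F' := by fun_prop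
  have hG'm : Measurable G' := by fun_prop
  have key : ∀ r : ℝ, 0 < r →
      (∫⁻ s in Ioo 0 r, g s * ENNReal.ofReal s) ^ (2:ℝ) * ENNReal.ofReal (r ^ (-3:ℝ))
        ≤ G' r * ∫⁻ s in Ioo 0 r, F' s := by
    intro r hr
    have split : ∀ s ∈ Ioo (0:ℝ) r, g s * ENNReal.ofReal s
        = (g s * ENNReal.ofReal (s ^ ((3:ℝ)/4))) * ENNReal.ofReal (s ^ ((1:ℝ)/4)) := by
      intro s hs
      rw [mul_assoc, ← ENNReal.ofReal_mul (rpow_nonneg hs.1.le _), ← Real.rpow_add hs.1]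
      norm_num
    have cs := lint_CS (volume.restrict (Ioo 0 r))
      (fun s => g s * ENNReal.ofReal (s ^ ((3:ℝ)/4)))
      (fun s => ENNReal.ofReal (s ^ ((1:ℝ)/4))) (by fun_prop) (by fun_prop)
    have e1 : ∫⁻ s in Ioo (0:ℝ) r, (g s * ENNReal.ofReal (s ^ ((3:ℝ)/4))) ^ (2:ℝ)
        = ∫⁻ s in Ioo (0:ℝ) r, F' s := by
      refine setLIntegral_congr_fun measurableSet_Ioo (fun s hs => ?_)
      rw [ENNReal.mul_rpow_of_nonneg _ _ (by norm_num : (0:ℝ) ≤ 2),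
        ENNReal.ofReal_rpow_of_pos (rpow_pos_of_pos hs.1 _), ← Real.rpow_mul hs.1.le]
      norm_num [hF']
    have e2 : ∫⁻ s in Ioo (0:ℝ) r, (ENNReal.ofReal (s ^ ((1:ℝ)/4))) ^ (2:ℝ)
        = ENNReal.ofReal (2/3 * r ^ ((3:ℝ)/2)) := by
      rw [setLIntegral_congr_fun measurableSet_Ioo (fun s (hs : s ∈ Ioo (0:ℝ) r) => by
        rw [ENNReal.ofReal_rpow_of_pos (rpow_pos_of_pos hs.1 _), ← Real.rpow_mul hs.1.le]),
        lint_Ioo_rpow (by norm_num) hr]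
      congr 1
      norm_num
      ring
    calc (∫⁻ s in Ioo 0 r, g s * ENNReal.ofReal s) ^ (2:ℝ) * ENNReal.ofReal (r ^ (-3:ℝ))
        = (∫⁻ s in Ioo 0 r, (g s * ENNReal.ofReal (s ^ ((3:ℝ)/4)))
            * ENNReal.ofReal (s ^ ((1:ℝ)/4))) ^ (2:ℝ) * ENNReal.ofReal (r ^ (-3:ℝ)) := by
          rw [setLIntegral_congr_fun measurableSet_Ioo split]
      _ ≤ ((∫⁻ s in Ioo (0:ℝ) r, F' s) * ENNReal.ofReal (2/3 * r ^ ((3:ℝ)/2)))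
            * ENNReal.ofReal (r ^ (-3:ℝ)) := by
          refine mul_le_mul_left ?_ _
          rw [e1, e2] at cs
          exact cs
      _ = G' r * ∫⁻ s in Ioo 0 r, F' s := by
          rw [mul_assoc, ← ENNReal.ofReal_mul (by positivity), mul_comm]
          congr 1
          rw [mul_assoc, ← Real.rpow_add hr]
          simp only [hG']
          norm_num
  calc ∫⁻ r in Ioi (0:ℝ),
        (∫⁻ s in Ioo 0 r, g s * ENNReal.ofReal s) ^ (2:ℝ) * ENNReal.ofReal (r ^ (-3:ℝ))
      ≤ ∫⁻ r in Ioi (0:ℝ), G' r * ∫⁻ s in Ioo 0 r, F' s :=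
        setLIntegral_mono' measurableSet_Ioi key
    _ = ∫⁻ s in Ioi (0:ℝ), F' s * ∫⁻ r in Ioi s, G' r := (lint_swap G' F' hG'm hF'm).symm
    _ ≤ ∫⁻ s in Ioi (0:ℝ), 2 * ((g s) ^ (2:ℝ) * ENNReal.ofReal s) := by
        refine setLIntegral_mono' measurableSet_Ioi fun s hs => ?_
        have hs0 : (0:ℝ) < s := hs
        have eint : ∫⁻ r in Ioi s, G' r = ENNReal.ofReal (2/3 * (2 * s ^ (-(1:ℝ)/2))) := by
          simp_rw [hG', ENNReal.ofReal_mul (by norm_num : (0:ℝ) ≤ 2/3)]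
          rw [lintegral_const_mul _ (by fun_prop), lint_Ioi_rpow (by norm_num) hs0]
          congr 1
          rw [show (-(3:ℝ)/2 + 1) = -(1:ℝ)/2 by norm_num]
          ring
        rw [eint, hF', mul_assoc, ← ENNReal.ofReal_mul (by positivity)]
        have : s ^ ((3:ℝ)/2) * (2/3 * (2 * s ^ (-(1:ℝ)/2))) = 4/3 * s := by
          rw [show (4:ℝ)/3 * s = 4/3 * s ^ ((3:ℝ)/2 + -(1:ℝ)/2) by
            rw [show ((3:ℝ)/2 + -(1:ℝ)/2) = 1 by norm_num, Real.rpow_one],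
            Real.rpow_add hs0]
          ring
        rw [this, ENNReal.ofReal_mul (by norm_num : (0:ℝ) ≤ 4/3)]
        calc (g s) ^ (2:ℝ) * (ENNReal.ofReal (4/3) * ENNReal.ofReal s)
            ≤ (g s) ^ (2:ℝ) * (2 * ENNReal.ofReal s) := by
              refine mul_le_mul_right (mul_le_mul_left ?_ _) _
              rw [show (2:ℝ≥0∞) = ENNReal.ofReal 2 by simp]
              exact ENNReal.ofReal_le_ofReal (by norm_num)
          _ = 2 * ((g s) ^ (2:ℝ) * ENNReal.ofReal s) := by ring
    _ = 2 * ∫⁻ s in Ioi (0:ℝ), (g s) ^ (2:ℝ) * ENNReal.ofReal s := by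
        rw [lintegral_const_mul _ (by fun_prop)]

end HelperLemmas

/-- The nonlinearity `N⁻(ψ⁻) = (A₀ - 2(A₂+1)/r² - r⁻¹ Im(ψ₂ ψ̄⁻)) ψ⁻`, with `ψ₂, A₂, A₀`
reconstructed from `ψ^±`, satisfies `‖N⁻(ψ⁻)‖_{L^{4/3}(r dr)} ≲ ‖ψ⁺‖³_{L⁴} + ‖ψ⁻‖³_{L⁴}`. -/
theorem stmt15 :
    ∃ C : ℝ≥0, 0 < C ∧ ∀ (ψp ψm ψ₂ : ℝ → ℂ) (A₀ A₂ : ℝ → ℝ),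
      Measurable ψp → Measurable ψm →
      (∀ r ∈ Set.Ioi (0:ℝ), ψ₂ r / (r : ℂ) = (ψp r - ψm r) / (2 * Complex.I)) →
      (∀ r ∈ Set.Ioi (0:ℝ),
        A₂ r + 1 = -(1/4) * ∫ s in Set.Ioo (0:ℝ) r, (‖ψp s‖ ^ 2 - ‖ψm s‖ ^ 2) * s) →
      (∀ r ∈ Set.Ioi (0:ℝ),
        A₀ r = -(1/2) * ((starRingEnd ℂ) (ψp r) * ψm r).re
          - ∫ s in Set.Ioi r, ((starRingEnd ℂ) (ψp s) * ψm s).re / s) →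
      eLpNorm (fun r =>
          ((A₀ r - 2 * (A₂ r + 1) / r ^ 2
            - (ψ₂ r * (starRingEnd ℂ) (ψm r)).im / r : ℝ) : ℂ) * ψm r)
        (4/3 : ℝ≥0∞) muRad
        ≤ C * (eLpNorm ψp 4 muRad ^ (3:ℕ) + eLpNorm ψm 4 muRad ^ (3:ℕ)) := by
  refine ⟨18, by norm_num, ?_⟩
  intro ψp ψm ψ₂ A₀ A₂ hψp hψm hψ2 hA2 hA0
  set f : ℝ → ℂ := fun r =>
    ((A₀ r - 2 * (A₂ r + 1) / r ^ 2
      - (ψ₂ r * (starRingEnd ℂ) (ψm r)).im / r : ℝ) : ℂ) * ψm r with hf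
  set p : ℝ → ℝ≥0∞ := fun r => (‖ψp r‖₊ : ℝ≥0∞) with hpdef
  set m : ℝ → ℝ≥0∞ := fun r => (‖ψm r‖₊ : ℝ≥0∞) with hmdef
  have hpm : Measurable p := hψp.nnnorm.coe_nnreal_ennreal
  have hmm : Measurable m := hψm.nnnorm.coe_nnreal_ennreal
  set Fpm : ℝ → ℝ≥0∞ := fun s => p s * m s with hFpmdef
  set F2 : ℝ → ℝ≥0∞ := fun s => p s ^ (2:ℝ) + m s ^ (2:ℝ) with hF2def
  have hFpm : Measurable Fpm := hpm.mul hmm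
  have hF2 : Measurable F2 := (hpm.pow_const _).add (hmm.pow_const _)
  set T : ℝ → ℝ≥0∞ := fun r => ∫⁻ s in Ioi r, Fpm s * ENNReal.ofReal s⁻¹ with hTdef
  set S : ℝ → ℝ≥0∞ := fun r => ∫⁻ s in Ioo 0 r, F2 s * ENNReal.ofReal s with hSdef
  have hTanti : Antitone T := fun a b hab => lintegral_mono_set (Ioi_subset_Ioi hab)
  have hSmono : Monotone S := fun a b hab => lintegral_mono_set (Ioo_subset_Ioo_right hab)
  have hT : Measurable T := hTanti.measurable
  have hS : Measurable S := hSmono.measurable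
  set Afun : ℝ → ℝ≥0∞ := fun r => 2⁻¹ * Fpm r + T r with hAdef
  set Bfun : ℝ → ℝ≥0∞ := fun r => 2⁻¹ * ENNReal.ofReal (r ^ (-2:ℝ)) * S r with hBdef
  set Cfun : ℝ → ℝ≥0∞ := fun r => 2⁻¹ * ((p r + m r) * m r) with hCdef
  have hA : Measurable Afun := (measurable_const.mul hFpm).add hT
  have hB : Measurable Bfun := (measurable_const.mul (by fun_prop)).mul hS
  have hC : Measurable Cfun := measurable_const.mul ((hpm.add hmm).mul hmm)
  -- pointwise bound
  have key : ∀ r ∈ Ioi (0:ℝ),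
      (‖f r‖₊ : ℝ≥0∞) ≤ (Afun r + Bfun r + Cfun r) * m r := by
    intro r hr
    have hr0 : (0:ℝ) < r := hr
    have hnorm : (‖f r‖₊ : ℝ≥0∞)
        = (‖(A₀ r - 2 * (A₂ r + 1) / r ^ 2
            - (ψ₂ r * (starRingEnd ℂ) (ψm r)).im / r : ℝ)‖₊ : ℝ≥0∞) * m r := by
      simp only [hf, nnnorm_mul, ENNReal.coe_mul, Complex.nnnorm_real, hmdef]
    rw [hnorm]
    refine mul_le_mul_left ?_ _
    have tri : (‖(A₀ r - 2 * (A₂ r + 1) / r ^ 2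
          - (ψ₂ r * (starRingEnd ℂ) (ψm r)).im / r : ℝ)‖₊ : ℝ≥0∞)
        ≤ (‖A₀ r‖₊ : ℝ≥0∞) + (‖2 * (A₂ r + 1) / r ^ 2‖₊ : ℝ≥0∞)
          + (‖(ψ₂ r * (starRingEnd ℂ) (ψm r)).im / r‖₊ : ℝ≥0∞) := by
      calc (‖(A₀ r - 2 * (A₂ r + 1) / r ^ 2
            - (ψ₂ r * (starRingEnd ℂ) (ψm r)).im / r : ℝ)‖₊ : ℝ≥0∞)
          ≤ (‖(A₀ r - 2 * (A₂ r + 1) / r ^ 2 : ℝ)‖₊ : ℝ≥0∞)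
            + (‖(ψ₂ r * (starRingEnd ℂ) (ψm r)).im / r‖₊ : ℝ≥0∞) := by
            exact_mod_cast nnnorm_sub_le _ _
        _ ≤ _ := by
            refine add_le_add_left ?_ _
            exact_mod_cast nnnorm_sub_le _ _
    refine le_trans tri (add_le_add (add_le_add ?_ ?_) ?_)
    · rw [hA0 r hr]
      exact boundA ψp ψm r hr0
    · exact boundB ψp ψm A₂ r hr0 (hA2 r hr)
    · exact boundC ψp ψm ψ₂ r hr0 (hψ2 r hr)
  -- eLpNorm as lintegral
  have hp0 : (4/3 : ℝ≥0∞) ≠ 0 := by norm_num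
  have hptop : (4/3 : ℝ≥0∞) ≠ ∞ := by
    intro h
    rw [ENNReal.div_eq_top] at h
    rcases h with ⟨_, h⟩ | ⟨h, _⟩ <;> norm_num at h
  have htr : (4/3 : ℝ≥0∞).toReal = (4/3 : ℝ) := by
    rw [ENNReal.toReal_div]; norm_num
  set Q : ℝ≥0∞ := ∫⁻ r, p r ^ (4:ℝ) ∂muRad with hQdef
  set R : ℝ≥0∞ := ∫⁻ r, m r ^ (4:ℝ) ∂muRad with hRdef
  have hPQ : eLpNorm ψp 4 muRad = Q ^ (1/4:ℝ) := by
    rw [eLpNorm_eq_lintegral_rpow_enorm_toReal (by norm_num) (by norm_num), hQdef]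
    norm_num
    rfl
  have hMR : eLpNorm ψm 4 muRad = R ^ (1/4:ℝ) := by
    rw [eLpNorm_eq_lintegral_rpow_enorm_toReal (by norm_num) (by norm_num), hRdef]
    norm_num
    rfl
  -- integral bounds
  have hFpm2 : ∫⁻ r, Fpm r ^ (2:ℝ) ∂muRad ≤ Q + R := by
    calc ∫⁻ r, Fpm r ^ (2:ℝ) ∂muRad
        ≤ ∫⁻ r, (p r ^ (4:ℝ) + m r ^ (4:ℝ)) ∂muRad := by
          refine lintegral_mono fun r => ?_
          rw [hFpmdef, ENNReal.mul_rpow_of_nonneg _ _ (by norm_num : (0:ℝ) ≤ 2)]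
          exact sq_mul_sq_le _ _
      _ = Q + R := lintegral_add_left (hpm.pow_const _) _
  have hF22 : ∫⁻ r, F2 r ^ (2:ℝ) ∂muRad ≤ 4 * (Q + R) := by
    calc ∫⁻ r, F2 r ^ (2:ℝ) ∂muRad
        ≤ ∫⁻ r, 4 * (p r ^ (4:ℝ) + m r ^ (4:ℝ)) ∂muRad := by
          refine lintegral_mono fun r => ?_
          rw [hF2def]
          refine le_trans (sq_add_le _ _) ?_
          rw [← ENNReal.rpow_mul, ← ENNReal.rpow_mul]
          norm_num
      _ = 4 * (Q + R) := by
          rw [lintegral_const_mul (f := fun r => p r ^ (4:ℝ) + m r ^ (4:ℝ)) _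
              ((hpm.pow_const _).add (hmm.pow_const _)),
            lintegral_add_left (hpm.pow_const _)]
  have hintA : ∫⁻ r, Afun r ^ (2:ℝ) ∂muRad ≤ 8 * (Q + R) := by
    have pw : ∀ r, Afun r ^ (2:ℝ) ≤ 4 * (Fpm r ^ (2:ℝ) + T r ^ (2:ℝ)) := by
      intro r
      refine le_trans (sq_add_le _ _) ?_
      refine mul_le_mul_right (add_le_add_left ?_ _) _
      rw [ENNReal.mul_rpow_of_nonneg _ _ (by norm_num : (0:ℝ) ≤ 2)]
      refine le_trans (mul_le_mul_left (ENNReal.rpow_le_one (by norm_num)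
        (by norm_num)) _) ?_
      rw [one_mul]
    have hTsq : ∫⁻ r, T r ^ (2:ℝ) ∂muRad ≤ Q + R := by
      calc ∫⁻ r, T r ^ (2:ℝ) ∂muRad
          = ∫⁻ r in Ioi (0:ℝ), T r ^ (2:ℝ) * ENNReal.ofReal r := muRad_lint _
        _ ≤ ∫⁻ s in Ioi (0:ℝ), Fpm s ^ (2:ℝ) * ENNReal.ofReal s := hardy_dual Fpm hFpm
        _ = ∫⁻ r, Fpm r ^ (2:ℝ) ∂muRad := (muRad_lint _).symm
        _ ≤ Q + R := hFpm2
    calc ∫⁻ r, Afun r ^ (2:ℝ) ∂muRad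
        ≤ ∫⁻ r, 4 * (Fpm r ^ (2:ℝ) + T r ^ (2:ℝ)) ∂muRad := lintegral_mono pw
      _ = 4 * ((∫⁻ r, Fpm r ^ (2:ℝ) ∂muRad) + ∫⁻ r, T r ^ (2:ℝ) ∂muRad) := by
          rw [lintegral_const_mul (f := fun r => Fpm r ^ (2:ℝ) + T r ^ (2:ℝ)) _
              ((hFpm.pow_const _).add (hT.pow_const _)),
            lintegral_add_left (hFpm.pow_const _)]
      _ ≤ 4 * ((Q + R) + (Q + R)) := by
          exact mul_le_mul_right (add_le_add hFpm2 hTsq) _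
      _ = 8 * (Q + R) := by ring
  have hintB : ∫⁻ r, Bfun r ^ (2:ℝ) ∂muRad ≤ 8 * (Q + R) := by
    have pw : ∀ r ∈ Ioi (0:ℝ), Bfun r ^ (2:ℝ) * ENNReal.ofReal r
        ≤ 4⁻¹ * (S r ^ (2:ℝ) * ENNReal.ofReal (r ^ (-3:ℝ))) := by
      intro r hr
      have hr0 : (0:ℝ) < r := hr
      rw [hBdef]
      rw [ENNReal.mul_rpow_of_nonneg _ _ (by norm_num : (0:ℝ) ≤ 2),
        ENNReal.mul_rpow_of_nonneg _ _ (by norm_num : (0:ℝ) ≤ 2)]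
      have e1 : (2⁻¹ : ℝ≥0∞) ^ (2:ℝ) = 4⁻¹ := by
        rw [rp2']
        rw [← ENNReal.mul_inv (Or.inl (by norm_num)) (Or.inl (by norm_num))]
        norm_num
      have e2 : ENNReal.ofReal (r ^ (-2:ℝ)) ^ (2:ℝ) * ENNReal.ofReal r
          = ENNReal.ofReal (r ^ (-3:ℝ)) := by
        rw [ENNReal.ofReal_rpow_of_pos (Real.rpow_pos_of_pos hr0 _),
          ← Real.rpow_mul hr0.le]
        nth_rewrite 2 [show r = r ^ (1:ℝ) from (Real.rpow_one r).symm]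
        rw [← ENNReal.ofReal_mul (Real.rpow_nonneg hr0.le _), ← Real.rpow_add hr0]
        norm_num
      calc (2⁻¹:ℝ≥0∞) ^ (2:ℝ) * ENNReal.ofReal (r ^ (-2:ℝ)) ^ (2:ℝ) * S r ^ (2:ℝ)
            * ENNReal.ofReal r
          = 4⁻¹ * (S r ^ (2:ℝ) * (ENNReal.ofReal (r ^ (-2:ℝ)) ^ (2:ℝ)
              * ENNReal.ofReal r)) := by rw [e1]; ring
        _ = 4⁻¹ * (S r ^ (2:ℝ) * ENNReal.ofReal (r ^ (-3:ℝ))) := by rw [e2]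
        _ ≤ 4⁻¹ * (S r ^ (2:ℝ) * ENNReal.ofReal (r ^ (-3:ℝ))) := le_rfl
    calc ∫⁻ r, Bfun r ^ (2:ℝ) ∂muRad
        = ∫⁻ r in Ioi (0:ℝ), Bfun r ^ (2:ℝ) * ENNReal.ofReal r := muRad_lint _
      _ ≤ ∫⁻ r in Ioi (0:ℝ), 4⁻¹ * (S r ^ (2:ℝ) * ENNReal.ofReal (r ^ (-3:ℝ))) :=
          setLIntegral_mono' measurableSet_Ioi pw
      _ = 4⁻¹ * ∫⁻ r in Ioi (0:ℝ), S r ^ (2:ℝ) * ENNReal.ofReal (r ^ (-3:ℝ)) :=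
          lintegral_const_mul _ ((hS.pow_const _).mul (by fun_prop))
      _ ≤ 4⁻¹ * (2 * ∫⁻ s in Ioi (0:ℝ), F2 s ^ (2:ℝ) * ENNReal.ofReal s) :=
          mul_le_mul_right (hardy_fwd F2 hF2) _
      _ = 2⁻¹ * ∫⁻ r, F2 r ^ (2:ℝ) ∂muRad := by
          rw [muRad_lint (fun r => F2 r ^ (2:ℝ)), ← mul_assoc]
          congr 1
          rw [show (4:ℝ≥0∞) = 2*2 by norm_num,
            ENNReal.mul_inv (Or.inl (by norm_num)) (Or.inl (by norm_num)), mul_assoc,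
            ENNReal.inv_mul_cancel (by norm_num) (by norm_num), mul_one]
      _ ≤ 2⁻¹ * (4 * (Q + R)) := mul_le_mul_right hF22 _
      _ ≤ 8 * (Q + R) := by
          rw [← mul_assoc]
          refine mul_le_mul_left ?_ _
          rw [show (2⁻¹ : ℝ≥0∞) * 4 = 2 by
            rw [show (4:ℝ≥0∞) = 2 * 2 by norm_num, ← mul_assoc,
              ENNReal.inv_mul_cancel (by norm_num) (by norm_num), one_mul]]
          norm_num
  have hintC : ∫⁻ r, Cfun r ^ (2:ℝ) ∂muRad ≤ 8 * (Q + R) := by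
    have pw : ∀ r, Cfun r ^ (2:ℝ) ≤ 8 * (p r ^ (4:ℝ) + m r ^ (4:ℝ)) := by
      intro r
      have h1 : Cfun r ≤ (p r + m r) * m r := by
        rw [hCdef]
        refine le_trans (mul_le_mul_left (by norm_num : (2⁻¹:ℝ≥0∞) ≤ 1) _) ?_
        rw [one_mul]
      refine le_trans (ENNReal.rpow_le_rpow h1 (by norm_num)) ?_
      rw [ENNReal.mul_rpow_of_nonneg _ _ (by norm_num : (0:ℝ) ≤ 2)]
      calc (p r + m r) ^ (2:ℝ) * m r ^ (2:ℝ)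
          ≤ 4 * (p r ^ (2:ℝ) + m r ^ (2:ℝ)) * m r ^ (2:ℝ) :=
            mul_le_mul_left (sq_add_le _ _) _
        _ = 4 * (p r ^ (2:ℝ) * m r ^ (2:ℝ) + m r ^ (2:ℝ) * m r ^ (2:ℝ)) := by ring
        _ ≤ 4 * ((p r ^ (4:ℝ) + m r ^ (4:ℝ)) + m r ^ (4:ℝ)) := by
            refine mul_le_mul_right (add_le_add (sq_mul_sq_le _ _) ?_) _
            rw [rp2', rp4']
        _ ≤ 8 * (p r ^ (4:ℝ) + m r ^ (4:ℝ)) := by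
            rw [show (8:ℝ≥0∞) = 4 * 2 by norm_num, mul_assoc]
            refine mul_le_mul_right ?_ _
            rw [two_mul]
            exact add_le_add_right le_add_self _
    calc ∫⁻ r, Cfun r ^ (2:ℝ) ∂muRad
        ≤ ∫⁻ r, 8 * (p r ^ (4:ℝ) + m r ^ (4:ℝ)) ∂muRad := lintegral_mono pw
      _ = 8 * (Q + R) := by
          rw [lintegral_const_mul (f := fun r => p r ^ (4:ℝ) + m r ^ (4:ℝ)) _
              ((hpm.pow_const _).add (hmm.pow_const _)),
            lintegral_add_left (hpm.pow_const _)]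
  -- main chain
  have hLP : eLpNorm f (4/3 : ℝ≥0∞) muRad
      = (∫⁻ r, (‖f r‖₊ : ℝ≥0∞) ^ (4/3:ℝ) ∂muRad) ^ (3/4:ℝ) := by
    rw [eLpNorm_eq_lintegral_rpow_enorm_toReal hp0 hptop, htr]
    norm_num
    rfl
  set G1 : ℝ → ℝ≥0∞ := fun r => Afun r * m r with hG1def
  set G2 : ℝ → ℝ≥0∞ := fun r => Bfun r * m r with hG2def
  set G3 : ℝ → ℝ≥0∞ := fun r => Cfun r * m r with hG3def
  have hG1 : Measurable G1 := hA.mul hmm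
  have hG2 : Measurable G2 := hB.mul hmm
  have hG3 : Measurable G3 := hC.mul hmm
  have mono1 : (∫⁻ r, (‖f r‖₊ : ℝ≥0∞) ^ (4/3:ℝ) ∂muRad) ^ (3/4:ℝ)
      ≤ (∫⁻ r, (G1 r + G2 r + G3 r) ^ (4/3:ℝ) ∂muRad) ^ (3/4:ℝ) := by
    refine ENNReal.rpow_le_rpow ?_ (by norm_num)
    rw [muRad_lint, muRad_lint]
    refine setLIntegral_mono' measurableSet_Ioi fun r hr => ?_
    refine mul_le_mul_left (ENNReal.rpow_le_rpow ?_ (by norm_num)) _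
    rw [hG1def, hG2def, hG3def]
    calc (‖f r‖₊ : ℝ≥0∞) ≤ (Afun r + Bfun r + Cfun r) * m r := key r hr
      _ = Afun r * m r + Bfun r * m r + Cfun r * m r := by ring
  have mink : (∫⁻ r, (G1 r + G2 r + G3 r) ^ (4/3:ℝ) ∂muRad) ^ (3/4:ℝ)
      ≤ (∫⁻ r, G1 r ^ (4/3:ℝ) ∂muRad) ^ (3/4:ℝ)
        + (∫⁻ r, G2 r ^ (4/3:ℝ) ∂muRad) ^ (3/4:ℝ)
        + (∫⁻ r, G3 r ^ (4/3:ℝ) ∂muRad) ^ (3/4:ℝ) := by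
    have h12 := ENNReal.lintegral_Lp_add_le (μ := muRad)
      ((hG1.add hG2).aemeasurable) hG3.aemeasurable (by norm_num : (1:ℝ) ≤ 4/3)
    have h1 := ENNReal.lintegral_Lp_add_le (μ := muRad)
      hG1.aemeasurable hG2.aemeasurable (by norm_num : (1:ℝ) ≤ 4/3)
    rw [show (1/(4/3):ℝ) = 3/4 by norm_num] at h12 h1
    simp only [Pi.add_apply] at h12 h1
    calc (∫⁻ r, (G1 r + G2 r + G3 r) ^ (4/3:ℝ) ∂muRad) ^ (3/4:ℝ)
        ≤ (∫⁻ r, (G1 r + G2 r) ^ (4/3:ℝ) ∂muRad) ^ (3/4:ℝ)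
          + (∫⁻ r, G3 r ^ (4/3:ℝ) ∂muRad) ^ (3/4:ℝ) := h12
      _ ≤ _ := add_le_add_left h1 _
  have hstep : ∀ (X : ℝ → ℝ≥0∞), Measurable X →
      (∫⁻ r, (X r * m r) ^ (4/3:ℝ) ∂muRad) ^ (3/4:ℝ)
        ≤ (∫⁻ r, X r ^ (2:ℝ) ∂muRad) ^ (1/2:ℝ) * R ^ (1/4:ℝ) := by
    intro X hX
    exact step X m hX.aemeasurable hmm.aemeasurable
  have bd : ∀ (X : ℝ → ℝ≥0∞), (∫⁻ r, X r ^ (2:ℝ) ∂muRad) ≤ 8 * (Q + R) →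
      (∫⁻ r, X r ^ (2:ℝ) ∂muRad) ^ (1/2:ℝ) ≤ 3 * (Q ^ (1/2:ℝ) + R ^ (1/2:ℝ)) := by
    intro X hX
    calc (∫⁻ r, X r ^ (2:ℝ) ∂muRad) ^ (1/2:ℝ)
        ≤ (8 * (Q + R)) ^ (1/2:ℝ) := ENNReal.rpow_le_rpow hX (by norm_num)
      _ = (8:ℝ≥0∞) ^ (1/2:ℝ) * (Q + R) ^ (1/2:ℝ) :=
          ENNReal.mul_rpow_of_nonneg _ _ (by norm_num)
      _ ≤ 3 * (Q ^ (1/2:ℝ) + R ^ (1/2:ℝ)) := by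
          refine mul_le_mul' ?_ (ENNReal.rpow_add_le_add_rpow Q R (by norm_num) (by norm_num))
          have h9 : ((9:ℝ≥0∞)) ^ (1/2:ℝ) = 3 := by
            rw [show (9:ℝ≥0∞) = 3 ^ (2:ℝ) by rw [rp2']; norm_num,
              ← ENNReal.rpow_mul]
            norm_num
          calc (8:ℝ≥0∞) ^ (1/2:ℝ) ≤ (9:ℝ≥0∞) ^ (1/2:ℝ) :=
              ENNReal.rpow_le_rpow (by norm_num) (by norm_num)
            _ = 3 := h9
  -- combine
  set a : ℝ≥0∞ := Q ^ (1/4:ℝ) with hadef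
  set b : ℝ≥0∞ := R ^ (1/4:ℝ) with hbdef
  have hQa : Q ^ (1/2:ℝ) = a ^ (2:ℕ) := by
    rw [hadef, ← ENNReal.rpow_natCast (Q ^ (1/4:ℝ)) 2, ← ENNReal.rpow_mul]
    norm_num
  have hRb : R ^ (1/2:ℝ) = b ^ (2:ℕ) := by
    rw [hbdef, ← ENNReal.rpow_natCast (R ^ (1/4:ℝ)) 2, ← ENNReal.rpow_mul]
    norm_num
  have final : eLpNorm f (4/3 : ℝ≥0∞) muRad
      ≤ 9 * ((a^(2:ℕ) + b^(2:ℕ)) * b) := by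
    rw [hLP]
    refine le_trans mono1 (le_trans mink ?_)
    have t1 := le_trans (hstep Afun hA) (mul_le_mul_left (bd Afun hintA) _)
    have t2 := le_trans (hstep Bfun hB) (mul_le_mul_left (bd Bfun hintB) _)
    have t3 := le_trans (hstep Cfun hC) (mul_le_mul_left (bd Cfun hintC) _)
    calc (∫⁻ r, G1 r ^ (4/3:ℝ) ∂muRad) ^ (3/4:ℝ)
          + (∫⁻ r, G2 r ^ (4/3:ℝ) ∂muRad) ^ (3/4:ℝ)
          + (∫⁻ r, G3 r ^ (4/3:ℝ) ∂muRad) ^ (3/4:ℝ)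
        ≤ 3 * (Q ^ (1/2:ℝ) + R ^ (1/2:ℝ)) * R ^ (1/4:ℝ)
          + 3 * (Q ^ (1/2:ℝ) + R ^ (1/2:ℝ)) * R ^ (1/4:ℝ)
          + 3 * (Q ^ (1/2:ℝ) + R ^ (1/2:ℝ)) * R ^ (1/4:ℝ) := add_le_add (add_le_add t1 t2) t3
      _ = 9 * ((Q ^ (1/2:ℝ) + R ^ (1/2:ℝ)) * R ^ (1/4:ℝ)) := by ring
      _ = 9 * ((a^(2:ℕ) + b^(2:ℕ)) * b) := by rw [hQa, hRb, hbdef]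
  have amg : (a^(2:ℕ) + b^(2:ℕ)) * b ≤ 2 * (a^(3:ℕ) + b^(3:ℕ)) := by
    rw [add_mul]
    have h1 : a^(2:ℕ) * b ≤ a^(3:ℕ) + b^(3:ℕ) := by
      rcases le_total a b with h | h
      · calc a^(2:ℕ) * b ≤ b^(2:ℕ) * b := mul_le_mul_left (pow_le_pow_left' h 2) _
          _ = b^(3:ℕ) := by ring
          _ ≤ _ := le_add_self
      · calc a^(2:ℕ) * b ≤ a^(2:ℕ) * a := mul_le_mul_right h _
          _ = a^(3:ℕ) := by ring
          _ ≤ _ := le_self_add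
    have h2 : b^(2:ℕ) * b ≤ a^(3:ℕ) + b^(3:ℕ) := by
      calc b^(2:ℕ) * b = b^(3:ℕ) := by ring
        _ ≤ _ := le_add_self
    calc a^(2:ℕ)*b + b^(2:ℕ)*b ≤ (a^(3:ℕ) + b^(3:ℕ)) + (a^(3:ℕ) + b^(3:ℕ)) :=
          add_le_add h1 h2
      _ = 2 * (a^(3:ℕ) + b^(3:ℕ)) := by ring
  calc eLpNorm f (4/3 : ℝ≥0∞) muRad
      ≤ 9 * ((a^(2:ℕ) + b^(2:ℕ)) * b) := final
    _ ≤ 9 * (2 * (a^(3:ℕ) + b^(3:ℕ))) := mul_le_mul_right amg _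
    _ = 18 * (a^(3:ℕ) + b^(3:ℕ)) := by ring
    _ = (18:ℝ≥0) * (eLpNorm ψp 4 muRad ^ (3:ℕ) + eLpNorm ψm 4 muRad ^ (3:ℕ)) := by
        rw [hPQ, hMR]
        norm_num
end
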